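/- arXiv:2007.11277 — 4 statements merged into one kernel-verified Lean document; each statement's English description precedes it below -/
import Mathlib

section
/- Let E be a Fréchet space (a complete metrizable locally convex space), a < b real numbers, and γ : [a,b] → E a Borel measurable function with separable image such that ∫_[a,b] q(γ(t)) dt < ∞ for every continuous seminorm q on E. Then for every continuous seminorm q on E and every ε > 0, there exists a staircase function η : [a,b] → E (i.e., a function constant on the open subintervals of some finite partition a = t₀ < t₁ < ⋯ < tₙ = b) such that η([a,b]) ⊆ γ([a,b]) and ∫_[a,b] q(γ(t) − η(t)) dt ≤ ε. -/
open MeasureTheory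
open scoped ENNReal symmDiff

/-- A staircase function on `[a,b]`: constant on the open subintervals of some
finite partition `a = t₀ < t₁ < ⋯ < tₙ = b`. -/
def IsStaircaseOn {E : Type*} (a b : ℝ) (η : ℝ → E) : Prop :=
  ∃ (n : ℕ) (t : Fin (n + 1) → ℝ), StrictMono t ∧ t 0 = a ∧ t (Fin.last n) = b ∧
    ∀ i : Fin n, ∃ c : E, ∀ x ∈ Set.Ioo (t i.castSucc) (t i.succ), η x = c

section Helpers

lemma exists_dense_seq {X : Type*} [TopologicalSpace X]
    [TopologicalSpace.PseudoMetrizableSpace X] {s : Set X}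
    (hs : TopologicalSpace.IsSeparable s) (hne : s.Nonempty) :
    ∃ e : ℕ → X, (∀ n, e n ∈ s) ∧
      ∀ x ∈ s, ∀ U : Set X, IsOpen U → x ∈ U → ∃ n, e n ∈ U := by
  letI : PseudoMetricSpace X := TopologicalSpace.pseudoMetrizableSpacePseudoMetric X
  obtain ⟨t, hts, htc, hst⟩ := hs.exists_countable_dense_subset
  rcases t.eq_empty_or_nonempty with rfl | htne
  · obtain ⟨x, hx⟩ := hne
    simpa using hst hx
  · obtain ⟨e, rfl⟩ := htc.exists_eq_range htne
    refine ⟨e, fun n => hts ⟨n, rfl⟩, fun x hx U hU hxU => ?_⟩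
    obtain ⟨y, hyU, n, rfl⟩ := _root_.mem_closure_iff.1 (hst hx) U hU hxU
    exact ⟨n, hyU⟩

lemma abscont {f : ℝ → ℝ} {A : Set ℝ} (hA : MeasurableSet A)
    (hf : IntegrableOn f A) (hf0 : ∀ x, 0 ≤ f x) {ε : ℝ} (hε : 0 < ε) :
    ∃ δ : ℝ≥0∞, 0 < δ ∧ ∀ S : Set ℝ, S ⊆ A → MeasurableSet S →
      MeasureTheory.volume S < δ → ∫ t in S, f t < ε := by
  have hfin : (∫⁻ x, ENNReal.ofReal (f x) ∂(volume.restrict A)) ≠ ∞ := by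
    have := (hasFiniteIntegral_iff_ofReal (ae_of_all _ hf0)).1 hf.2
    exact this.ne
  obtain ⟨δ, hδpos, hδ⟩ := exists_pos_setLIntegral_lt_of_measure_lt hfin
    (ε := ENNReal.ofReal ε) ((ENNReal.ofReal_pos.2 hε).ne')
  refine ⟨δ, hδpos, fun S hSA hSm hSμ => ?_⟩
  have hres : (volume.restrict A).restrict S = volume.restrict S := by
    rw [Measure.restrict_restrict hSm, Set.inter_eq_left.2 hSA]
  have hμ : (volume.restrict A) S < δ := by
    rwa [Measure.restrict_apply hSm, Set.inter_eq_left.2 hSA]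
  have h2 := hδ S hμ
  rw [hres] at h2
  have hfS : IntegrableOn f S volume := hf.mono_set hSA
  rw [integral_eq_lintegral_of_nonneg_ae (ae_of_all _ hf0) hfS.1]
  exact ENNReal.toReal_lt_of_lt_ofReal h2

lemma approx_by_intervals {A : Set ℝ} (hA : MeasurableSet A) (hbd : volume A ≠ ∞)
    {δ : ℝ≥0∞} (hδ : 0 < δ) :
    ∃ F : Finset (ℝ × ℝ), volume (A ∆ (⋃ p ∈ F, Set.Ioo p.1 p.2)) < δ := by
  have hδ2 : δ / 2 ≠ 0 := by
    simp [ENNReal.div_eq_zero_iff, hδ.ne']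
  obtain ⟨U, hAU, hUo, hUfin, hUA⟩ := hA.exists_isOpen_diff_lt hbd hδ2
  obtain ⟨K, hKA, hKc, hAK⟩ := hA.exists_isCompact_diff_lt hbd hδ2
  have hKU : K ⊆ U := hKA.trans hAU
  have hx : ∀ x : K, ∃ p : ℝ × ℝ, (x : ℝ) ∈ Set.Ioo p.1 p.2 ∧ Set.Ioo p.1 p.2 ⊆ U := by
    intro i
    obtain ⟨r, hr, hball⟩ := Metric.isOpen_iff.1 hUo (i : ℝ) (hKU i.2)
    exact ⟨((i : ℝ) - r, (i : ℝ) + r),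
      Set.mem_Ioo.2 ⟨by dsimp only; linarith, by dsimp only; linarith⟩,
      by rw [← Real.ball_eq_Ioo]; exact hball⟩
  choose c hc1 hc2 using hx
  obtain ⟨s, hs⟩ := hKc.elim_finite_subcover (fun i : K => Set.Ioo (c i).1 (c i).2)
    (fun i => isOpen_Ioo) (fun x hxK => Set.mem_iUnion.2 ⟨⟨x, hxK⟩, hc1 ⟨x, hxK⟩⟩)
  refine ⟨s.image c, ?_⟩
  set V := ⋃ p ∈ s.image c, Set.Ioo p.1 p.2 with hV
  have hKV : K ⊆ V := by
    intro x hxK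
    obtain ⟨i, hi⟩ := Set.mem_iUnion₂.1 (hs hxK)
    exact Set.mem_biUnion (Finset.mem_image_of_mem c hi.1) hi.2
  have hVU : V ⊆ U := by
    intro x hxV
    obtain ⟨p, hp, hxp⟩ := Set.mem_iUnion₂.1 hxV
    obtain ⟨i, _, rfl⟩ := Finset.mem_image.1 hp
    exact hc2 i hxp
  have hsub : A ∆ V ⊆ (U \ A) ∪ (A \ K) := by
    rintro x (⟨hxA, hxV⟩ | ⟨hxV, hxA⟩)
    · exact Or.inr ⟨hxA, fun hxK => hxV (hKV hxK)⟩
    · exact Or.inl ⟨hVU hxV, hxA⟩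
  calc volume (A ∆ V) ≤ volume ((U \ A) ∪ (A \ K)) := measure_mono hsub
    _ ≤ volume (U \ A) + volume (A \ K) := measure_union_le _ _
    _ < δ / 2 + δ / 2 := ENNReal.add_lt_add hUA hAK
    _ = δ := ENNReal.add_halves δ

lemma exists_partition (a b : ℝ) (hab : a < b) (P : Finset ℝ) (haP : a ∈ P) (hbP : b ∈ P)
    (hP : ∀ x ∈ P, x ∈ Set.Icc a b) :
    ∃ (n : ℕ) (t : Fin (n + 1) → ℝ), StrictMono t ∧ t 0 = a ∧ t (Fin.last n) = b ∧
      (∀ i : Fin n, ∀ y ∈ Set.Ioo (t i.castSucc) (t i.succ), y ∉ P) ∧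
      (∀ x ∈ Set.Icc a b, x ∉ P →
        ∃ i : Fin n, x ∈ Set.Ioo (t i.castSucc) (t i.succ)) := by
  have hcard : 0 < P.card := Finset.card_pos.2 ⟨a, haP⟩
  obtain ⟨n, hn⟩ : ∃ n : ℕ, P.card = n + 1 := ⟨P.card - 1, (Nat.succ_pred_eq_of_pos hcard).symm⟩
  set t : Fin (n + 1) → ℝ := fun i => P.orderEmbOfFin hn i with ht
  have hmono : StrictMono t := (P.orderEmbOfFin hn).strictMono
  have hmem : ∀ i, t i ∈ P := fun i => P.orderEmbOfFin_mem hn i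
  have hrange : ∀ x ∈ P, ∃ i, t i = x := by
    intro x hx
    have : x ∈ Set.range (P.orderEmbOfFin hn) := by
      rw [P.range_orderEmbOfFin hn]; exact hx
    exact this
  have hne : P.Nonempty := ⟨a, haP⟩
  have ht0 : t 0 = a := by
    have h0 : t ⟨0, Nat.succ_pos n⟩ = P.min' _ := Finset.orderEmbOfFin_zero hn (Nat.succ_pos n)
    have h1 : (0 : Fin (n + 1)) = ⟨0, Nat.succ_pos n⟩ := Fin.ext (by simp)
    rw [h1, h0]
    exact le_antisymm (Finset.min'_le P a haP) (Finset.le_min' _ _ _ fun y hy => (hP y hy).1)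
  have htlast : t (Fin.last n) = b := by
    have h0 : t ⟨n + 1 - 1, Nat.sub_lt (Nat.succ_pos n) Nat.one_pos⟩ = P.max' _ :=
      Finset.orderEmbOfFin_last hn (Nat.succ_pos n)
    have h1 : Fin.last n = ⟨n + 1 - 1, Nat.sub_lt (Nat.succ_pos n) Nat.one_pos⟩ :=
      Fin.ext (by simp)
    rw [h1, h0]
    exact le_antisymm (Finset.max'_le _ _ _ fun y hy => (hP y hy).2) (Finset.le_max' P b hbP)
  refine ⟨n, t, hmono, ht0, htlast, ?_, ?_⟩
  · rintro i y ⟨hy1, hy2⟩ hyP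
    obtain ⟨j, rfl⟩ := hrange y hyP
    have h1 : i.castSucc < j := hmono.lt_iff_lt.1 hy1
    have h2 : j < i.succ := hmono.lt_iff_lt.1 hy2
    have h1' : (i : ℕ) < (j : ℕ) := h1
    have h2' : (j : ℕ) < (i : ℕ) + 1 := h2
    omega
  · intro x hx hxP
    have hax : a < x := lt_of_le_of_ne hx.1 (fun h => hxP (h ▸ haP))
    have hxb : x < b := lt_of_le_of_ne hx.2 (fun h => hxP (h.symm ▸ hbP))
    set Q : Finset (Fin (n + 1)) := Finset.univ.filter (fun j => t j < x) with hQ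
    have hQne : Q.Nonempty := ⟨0, by simp [hQ, ht0, hax]⟩
    set i₀ := Q.max' hQne with hi₀
    have hi₀Q : i₀ ∈ Q := Q.max'_mem hQne
    have hi₀x : t i₀ < x := by simpa [hQ] using hi₀Q
    have hi₀last : i₀ ≠ Fin.last n := by
      intro h
      rw [h, htlast] at hi₀x
      exact absurd hi₀x (not_lt.2 hxb.le)
    have hi₀lt : (i₀ : ℕ) < n := by
      rcases lt_or_eq_of_le (Nat.lt_succ_iff.1 i₀.2) with h | h
      · exact h
      · exact absurd (Fin.ext h : i₀ = Fin.last n) hi₀last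
    refine ⟨⟨i₀, hi₀lt⟩, ?_, ?_⟩
    · simpa [Fin.castSucc] using hi₀x
    · by_contra hcon
      push_neg at hcon
      have hsucc : (⟨(i₀ : ℕ), hi₀lt⟩ : Fin n).succ ∈ Q := by
        simp only [hQ, Finset.mem_filter, Finset.mem_univ, true_and]
        rcases lt_or_eq_of_le hcon with h | h
        · exact h
        · exact absurd h.symm (by intro hh; exact hxP (hh ▸ hmem _))
      have hle := Q.le_max' _ hsucc
      rw [← hi₀] at hle
      have : (i₀ : ℕ) + 1 ≤ (i₀ : ℕ) := by simpa [Fin.le_def] using hle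
      omega

end Helpers

/-- Staircase approximation of `L¹`-functions into a Fréchet space, with values
in the image of the approximated function. -/
theorem staircase_approximation_L1
    {E : Type*} [AddCommGroup E] [UniformSpace E] [IsUniformAddGroup E]
    [Module ℝ E] [ContinuousSMul ℝ E] [LocallyConvexSpace ℝ E]
    [CompleteSpace E] [TopologicalSpace.MetrizableSpace E]
    [MeasurableSpace E] [BorelSpace E]
    (a b : ℝ) (hab : a < b) (γ : ℝ → E)
    (hmeas : Measurable ((Set.Icc a b).restrict γ))
    (hsep : TopologicalSpace.IsSeparable (γ '' Set.Icc a b))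
    (hint : ∀ q : Seminorm ℝ E, Continuous q →
      IntegrableOn (fun t => q (γ t)) (Set.Icc a b))
    (q : Seminorm ℝ E) (hq : Continuous q) (ε : ℝ) (hε : 0 < ε) :
    ∃ η : ℝ → E, IsStaircaseOn a b η ∧
      η '' Set.Icc a b ⊆ γ '' Set.Icc a b ∧
      ∫ t in Set.Icc a b, q (γ t - η t) ≤ ε := by
  classical
  have hba : (0:ℝ) < b - a := sub_pos.2 hab
  have haI : a ∈ Set.Icc a b := Set.left_mem_Icc.2 hab.le
  have hSne : (γ '' Set.Icc a b).Nonempty := ⟨γ a, a, haI, rfl⟩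
  -- the globalized function g
  set g : ℝ → E := fun t => (Set.Icc a b).restrict γ (Set.projIcc a b hab.le t) with hgdef
  have hgmeas : Measurable g := hmeas.comp (continuous_projIcc.measurable)
  have hgeq : ∀ t ∈ Set.Icc a b, g t = γ t := by
    intro t ht
    simp only [hgdef, Set.restrict_apply, Set.projIcc_of_mem hab.le ht]
    rfl
  have hgS : ∀ t, g t ∈ γ '' Set.Icc a b :=
    fun t => ⟨(Set.projIcc a b hab.le t : ℝ), (Set.projIcc a b hab.le t).2, rfl⟩
  have hgsm : StronglyMeasurable g :=
    stronglyMeasurable_iff_measurable_separable.2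
      ⟨hgmeas, hsep.mono (Set.range_subset_iff.2 hgS)⟩
  have hqg_sm : ∀ x : E, StronglyMeasurable (fun t => q (g t - x)) := fun x =>
    hq.comp_stronglyMeasurable (hgsm.sub stronglyMeasurable_const)
  have hgint : IntegrableOn (fun t => q (g t)) (Set.Icc a b) := by
    refine (hint q hq).congr_fun ?_ measurableSet_Icc
    exact fun t ht => (congrArg (⇑q) (hgeq t ht)).symm
  set ε8 := ε / 8 with hε8def
  have hε8 : 0 < ε8 := by positivity
  obtain ⟨δ₀, hδ₀pos, hδ₀⟩ := abscont measurableSet_Icc hgint (fun t => apply_nonneg q _) hε8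
  set δ₁ := ε / (2 * (b - a)) with hδ₁def
  have hδ₁ : 0 < δ₁ := by positivity
  obtain ⟨e, heS, hedense⟩ := exists_dense_seq hsep hSne
  set B : ℕ → Set ℝ := fun k => Set.Icc a b ∩ {t | q (g t - e k) < δ₁} with hBdef
  have hBmeas : ∀ k, MeasurableSet (B k) := fun k =>
    measurableSet_Icc.inter (measurableSet_lt (hqg_sm (e k)).measurable measurable_const)
  have hBcover : Set.Icc a b ⊆ ⋃ k, B k := by
    intro t ht
    have hU : IsOpen {x : E | q (g t - x) < δ₁} :=
      isOpen_lt (hq.comp (continuous_const.sub continuous_id)) continuous_const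
    have hmem : g t ∈ {x : E | q (g t - x) < δ₁} := by
      simp only [Set.mem_setOf_eq, sub_self, map_zero]
      exact hδ₁
    obtain ⟨k, hk⟩ := hedense (g t) (hgS t) _ hU hmem
    exact Set.mem_iUnion.2 ⟨k, ht, hk⟩
  -- choose N
  set D : ℕ → Set ℝ := fun N => Set.Icc a b \ ⋃ k ∈ Finset.range N, B k with hDdef
  have hDmeas : ∀ N, MeasurableSet (D N) := fun N =>
    measurableSet_Icc.diff (Finset.measurableSet_biUnion _ fun k _ => hBmeas k)
  have hDanti : Antitone D := by
    intro N M hNM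
    apply Set.diff_subset_diff_right
    intro x hx
    obtain ⟨k, hk, hxk⟩ := Set.mem_iUnion₂.1 hx
    exact Set.mem_iUnion₂.2 ⟨k, Finset.mem_range.2 (lt_of_lt_of_le (Finset.mem_range.1 hk) hNM),
      hxk⟩
  have hDempty : ⋂ N, D N = ∅ := by
    ext x
    simp only [Set.mem_iInter, Set.mem_empty_iff_false, iff_false]
    intro hx
    have hx0 := hx 0
    obtain ⟨k, hk⟩ := Set.mem_iUnion.1 (hBcover hx0.1)
    exact (hx (k + 1)).2 (Set.mem_iUnion₂.2 ⟨k, Finset.mem_range.2 (Nat.lt_succ_self k), hk⟩)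
  -- bound for the default value g a
  have hga1 : (0:ℝ) < q (g a) + 1 := by positivity
  set δD := min δ₀ (ENNReal.ofReal (ε8 / (q (g a) + 1))) with hδDdef
  have hδDpos : 0 < δD := lt_min hδ₀pos (ENNReal.ofReal_pos.2 (by positivity))
  have htend : Filter.Tendsto (fun N => volume (D N)) Filter.atTop (nhds 0) := by
    have := tendsto_measure_iInter_atTop (μ := volume) (s := D)
      (fun N => (hDmeas N).nullMeasurableSet) hDanti
      ⟨0, ((measure_mono Set.diff_subset).trans_lt measure_Icc_lt_top).ne⟩
    rwa [hDempty, measure_empty] at this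
  obtain ⟨N, hDμ⟩ := (htend.eventually_lt_const hδDpos).exists
  have hDIcc : D N ⊆ Set.Icc a b := Set.diff_subset
  -- QM
  obtain ⟨QM, hQM1, hQM2, hQM0⟩ : ∃ QM : ℝ, q (g a) ≤ QM ∧
      (∀ k, k < N → q (e k) ≤ QM) ∧ 0 ≤ QM := by
    refine ⟨(insert (q (g a)) ((Finset.range N).image fun k => q (e k))).max'
      ⟨q (g a), Finset.mem_insert_self _ _⟩, ?_, fun k hk => ?_, ?_⟩
    · exact Finset.le_max' _ _ (Finset.mem_insert_self _ _)
    · exact Finset.le_max' _ _ (Finset.mem_insert_of_mem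
        (Finset.mem_image_of_mem (fun k => q (e k)) (Finset.mem_range.2 hk)))
    · exact le_trans (apply_nonneg q _) (Finset.le_max' _ _ (Finset.mem_insert_self _ _))
  have hQMpos : (0:ℝ) < QM + 1 := by positivity
  set δ' := min δ₀ (ENNReal.ofReal (ε8 / (QM + 1))) with hδ'def
  have hδ'pos : 0 < δ' := lt_min hδ₀pos (ENNReal.ofReal_pos.2 (by positivity))
  have hδ'fin : δ' ≠ ∞ := (min_le_right _ _).trans_lt ENNReal.ofReal_lt_top |>.ne
  set δk := (δ' / 2) / ((N : ℝ≥0∞) + 1) with hδkdef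
  have hδkpos : 0 < δk := ENNReal.div_pos
    (by simp [ENNReal.div_eq_zero_iff, hδ'pos.ne', hδ'fin]) (by simp)
  -- the sets A
  set A : ℕ → Set ℝ := fun k => B k \ ⋃ j ∈ Finset.range k, B j with hAdef
  have hAmeas : ∀ k, MeasurableSet (A k) := fun k =>
    (hBmeas k).diff (Finset.measurableSet_biUnion _ fun j _ => hBmeas j)
  have hAB : ∀ k, A k ⊆ B k := fun k => Set.diff_subset
  have hAdisj : ∀ j k, j < k → ∀ s, s ∈ A j → s ∈ A k → False := by
    intro j k hjk s hsj hsk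
    exact hsk.2 (Set.mem_iUnion₂.2 ⟨j, Finset.mem_range.2 hjk, hsj.1⟩)
  have hAcov : ∀ s ∈ Set.Icc a b, s ∉ D N → ∃ k, k < N ∧ s ∈ A k := by
    intro s hs hsD
    have hex : ∃ k, k < N ∧ s ∈ B k := by
      by_contra hcon
      push_neg at hcon
      refine hsD ⟨hs, fun hmem => ?_⟩
      obtain ⟨k, hk, hsk⟩ := Set.mem_iUnion₂.1 hmem
      exact hcon k (Finset.mem_range.1 hk) hsk
    obtain ⟨k, hkN, hsk⟩ := hex
    have hex' : ∃ j, s ∈ B j := ⟨k, hsk⟩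
    refine ⟨Nat.find hex', lt_of_le_of_lt (Nat.find_min' hex' hsk) hkN,
      Nat.find_spec hex', fun hmem => ?_⟩
    obtain ⟨j, hj, hsj⟩ := Set.mem_iUnion₂.1 hmem
    exact Nat.find_min hex' (Finset.mem_range.1 hj) hsj
  -- interval approximations
  have hVex : ∀ k, ∃ F : Finset (ℝ × ℝ),
      k < N → volume ((A k) ∆ (⋃ p ∈ F, Set.Ioo p.1 p.2)) < δk := by
    intro k
    by_cases hk : k < N
    · obtain ⟨F, hF⟩ := approx_by_intervals (hAmeas k)
        (((measure_mono ((hAB k).trans (Set.inter_subset_left))).trans_lt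
          measure_Icc_lt_top).ne) hδkpos
      exact ⟨F, fun _ => hF⟩
    · exact ⟨∅, fun h => absurd h hk⟩
  choose F hF using hVex
  set V : ℕ → Set ℝ := fun k => ⋃ p ∈ F k, Set.Ioo p.1 p.2 with hVdef
  have hVmeas : ∀ k, MeasurableSet (V k) :=
    fun k => (isOpen_biUnion fun p _ => isOpen_Ioo).measurableSet
  set bad := ⋃ k ∈ Finset.range N, ((A k) ∆ (V k)) with hbaddef
  have hbadmeas : MeasurableSet bad :=
    Finset.measurableSet_biUnion _ fun k _ => (hAmeas k).symmDiff (hVmeas k)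
  have hbadμ : volume bad < δ' := by
    calc volume bad ≤ ∑ k ∈ Finset.range N, volume ((A k) ∆ (V k)) :=
          measure_biUnion_finset_le _ _
      _ ≤ ∑ _k ∈ Finset.range N, δk :=
          Finset.sum_le_sum fun k hk => (hF k (Finset.mem_range.1 hk)).le
      _ = (N : ℝ≥0∞) * δk := by simp [Finset.sum_const, nsmul_eq_mul]
      _ ≤ ((N : ℝ≥0∞) + 1) * δk := mul_le_mul_left le_self_add _
      _ = δ' / 2 := ENNReal.mul_div_cancel' (by simp) (by simp)
      _ < δ' := ENNReal.half_lt_self hδ'pos.ne' hδ'fin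
  -- the staircase function
  set W : ℕ → Set ℝ := fun k => V k \ ⋃ j ∈ Finset.range k, V j with hWdef
  set η : ℝ → E := fun s => if h : ∃ k, k < N ∧ s ∈ W k then e h.choose else g a with hηdef
  have hWdisj : ∀ j k, j ≠ k → ∀ s, s ∈ W j → s ∈ W k → False := by
    intro j k hjk s hsj hsk
    rcases lt_or_gt_of_ne hjk with h | h
    · exact hsk.2 (Set.mem_iUnion₂.2 ⟨j, Finset.mem_range.2 h, hsj.1⟩)
    · exact hsj.2 (Set.mem_iUnion₂.2 ⟨k, Finset.mem_range.2 h, hsk.1⟩)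
  have hηW : ∀ k, k < N → ∀ s, s ∈ W k → η s = e k := by
    intro k hk s hs
    have h : ∃ k, k < N ∧ s ∈ W k := ⟨k, hk, hs⟩
    have hcs := h.choose_spec
    rcases eq_or_ne h.choose k with heq | hne
    · simp only [hηdef]
      rw [dif_pos h, heq]
    · exact absurd (hWdisj _ _ hne s hcs.2 hs) not_false
  have hη0 : ∀ s, (∀ k, k < N → s ∉ W k) → η s = g a := by
    intro s hs
    simp only [hηdef]
    rw [dif_neg]
    rintro ⟨k, hk, hWk⟩
    exact hs k hk hWk
  have hηQM : ∀ s, q (η s) ≤ QM := by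
    intro s
    simp only [hηdef]
    split_ifs with h
    · exact hQM2 _ h.choose_spec.1
    · exact hQM1
  have hηS : ∀ s, η s ∈ γ '' Set.Icc a b := by
    intro s
    simp only [hηdef]
    split_ifs with h
    · exact heS _
    · exact hgS a
  -- the partition
  set P : Finset ℝ := insert a (insert b ((Finset.range N).biUnion fun k =>
    (F k).biUnion fun p => ({p.1, p.2} : Finset ℝ).filter fun x => x ∈ Set.Icc a b)) with hPdef
  have hPIcc : ∀ x ∈ P, x ∈ Set.Icc a b := by
    intro x hx
    simp only [hPdef, Finset.mem_insert, Finset.mem_biUnion, Finset.mem_filter] at hx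
    rcases hx with rfl | rfl | ⟨k, _, p, _, _, h⟩
    · exact haI
    · exact Set.right_mem_Icc.2 hab.le
    · exact h
  have hend : ∀ k, k < N → ∀ p ∈ F k, ∀ x ∈ ({p.1, p.2} : Finset ℝ),
      x ∈ Set.Icc a b → x ∈ P := by
    intro k hk p hp x hx hxI
    simp only [hPdef, Finset.mem_insert, Finset.mem_biUnion, Finset.mem_filter]
    exact Or.inr (Or.inr ⟨k, Finset.mem_range.2 hk, p, hp, Finset.mem_insert.1 hx |>.imp id
      (by simp only [Finset.mem_singleton]; exact id), hxI⟩)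
  obtain ⟨n, t, hmono, ht0, htlast, hgap, hcov⟩ := exists_partition a b hab P
    (Finset.mem_insert_self _ _) (Finset.mem_insert_of_mem (Finset.mem_insert_self _ _)) hPIcc
  have hIoo_ab : ∀ i : Fin n, Set.Ioo (t i.castSucc) (t i.succ) ⊆ Set.Ioo a b := by
    intro i x hx
    constructor
    · exact lt_of_le_of_lt (ht0 ▸ hmono.monotone (Fin.zero_le _)) hx.1
    · exact lt_of_lt_of_le hx.2 (htlast ▸ hmono.monotone (Fin.le_last _))
  have hVconst : ∀ i : Fin n, ∀ x ∈ Set.Ioo (t i.castSucc) (t i.succ),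
      ∀ y ∈ Set.Ioo (t i.castSucc) (t i.succ), ∀ k, k < N → x ∈ V k → y ∈ V k := by
    intro i x hx y hy k hk hxV
    obtain ⟨p, hpF, hxp⟩ := Set.mem_iUnion₂.1 hxV
    have hxab := hIoo_ab i hx
    have hyab := hIoo_ab i hy
    refine Set.mem_iUnion₂.2 ⟨p, hpF, ?_, ?_⟩
    · by_contra hcon
      push_neg at hcon
      have h1 : p.1 ∈ Set.Ioo (t i.castSucc) (t i.succ) :=
        ⟨lt_of_lt_of_le hy.1 hcon, lt_trans hxp.1 hx.2⟩
      have h2 : p.1 ∈ Set.Icc a b :=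
        ⟨le_of_lt (lt_of_lt_of_le hyab.1 hcon), le_of_lt (lt_trans hxp.1 hxab.2)⟩
      exact hgap i p.1 h1 (hend k hk p hpF p.1 (Finset.mem_insert_self _ _) h2)
    · by_contra hcon
      push_neg at hcon
      have h1 : p.2 ∈ Set.Ioo (t i.castSucc) (t i.succ) :=
        ⟨lt_trans hx.1 hxp.2, lt_of_le_of_lt hcon hy.2⟩
      have h2 : p.2 ∈ Set.Icc a b :=
        ⟨le_of_lt (lt_trans hxab.1 hxp.2), le_of_lt (lt_of_le_of_lt hcon hyab.2)⟩
      exact hgap i p.2 h1 (hend k hk p hpF p.2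
        (Finset.mem_insert_of_mem (Finset.mem_singleton_self _)) h2)
  have hηconst : ∀ i : Fin n, ∀ x ∈ Set.Ioo (t i.castSucc) (t i.succ),
      ∀ y ∈ Set.Ioo (t i.castSucc) (t i.succ), η x = η y := by
    intro i x hx y hy
    have hViff : ∀ k, k < N → (x ∈ V k ↔ y ∈ V k) := fun k hk =>
      ⟨fun h => hVconst i x hx y hy k hk h, fun h => hVconst i y hy x hx k hk h⟩
    have hWiff : ∀ k, k < N → (x ∈ W k ↔ y ∈ W k) := by
      intro k hk
      constructor
      · rintro ⟨h1, h2⟩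
        refine ⟨(hViff k hk).1 h1, fun hmem => h2 ?_⟩
        obtain ⟨j, hj, hyj⟩ := Set.mem_iUnion₂.1 hmem
        exact Set.mem_iUnion₂.2 ⟨j, hj,
          (hViff j (lt_trans (Finset.mem_range.1 hj) hk)).2 hyj⟩
      · rintro ⟨h1, h2⟩
        refine ⟨(hViff k hk).2 h1, fun hmem => h2 ?_⟩
        obtain ⟨j, hj, hxj⟩ := Set.mem_iUnion₂.1 hmem
        exact Set.mem_iUnion₂.2 ⟨j, hj,
          (hViff j (lt_trans (Finset.mem_range.1 hj) hk)).1 hxj⟩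
    by_cases hex : ∃ k, k < N ∧ x ∈ W k
    · obtain ⟨k, hk, hxk⟩ := hex
      rw [hηW k hk x hxk, hηW k hk y ((hWiff k hk).1 hxk)]
    · push_neg at hex
      rw [hη0 x hex, hη0 y (fun k hk hyk => hex k hk ((hWiff k hk).2 hyk))]
  have hstair : IsStaircaseOn a b η := by
    refine ⟨n, t, hmono, ht0, htlast, fun i => ?_⟩
    have hlt : t i.castSucc < t i.succ := hmono Fin.castSucc_lt_succ
    have hm : (t i.castSucc + t i.succ) / 2 ∈ Set.Ioo (t i.castSucc) (t i.succ) :=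
      ⟨by linarith, by linarith⟩
    exact ⟨η ((t i.castSucc + t i.succ) / 2), fun x hx => hηconst i x hx _ hm⟩
  -- pointwise bound
  set bad' := bad ∩ Set.Icc a b with hbad'def
  set GB : ℝ → ℝ := fun s => δ₁ + (D N).indicator (fun u => q (g u) + q (g a)) s
      + bad'.indicator (fun u => q (g u) + QM) s with hGBdef
  have hind_nonneg1 : ∀ s, 0 ≤ (D N).indicator (fun u => q (g u) + q (g a)) s := fun s =>
    Set.indicator_nonneg (fun u _ => by positivity) s
  have hind_nonneg2 : ∀ s, 0 ≤ bad'.indicator (fun u => q (g u) + QM) s := fun s =>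
    Set.indicator_nonneg (fun u _ => add_nonneg (apply_nonneg q _) hQM0) s
  have hpt : ∀ s ∈ Set.Icc a b, q (γ s - η s) ≤ GB s := by
    intro s hs
    rw [← hgeq s hs]
    by_cases hbad : s ∈ bad
    · have h3 : bad'.indicator (fun u => q (g u) + QM) s = q (g s) + QM :=
        Set.indicator_of_mem (Set.mem_inter hbad hs) _
      have hb : q (g s - η s) ≤ q (g s) + QM :=
        le_trans (map_sub_le_add q _ _) (add_le_add_right (hηQM s) _)
      calc q (g s - η s) ≤ q (g s) + QM := hb
        _ ≤ GB s := by
            simp only [hGBdef, h3]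
            have := hind_nonneg1 s
            linarith
    · have hAV : ∀ k, k < N → (s ∈ A k ↔ s ∈ V k) := by
        intro k hk
        by_contra hne
        have hsym : s ∈ (A k) ∆ (V k) := by
          rw [Set.mem_symmDiff]
          by_cases hA : s ∈ A k
          · exact Or.inl ⟨hA, fun hV => hne ⟨fun _ => hV, fun _ => hA⟩⟩
          · by_cases hV : s ∈ V k
            · exact Or.inr ⟨hV, hA⟩
            · exact absurd ⟨fun h => absurd h hA, fun h => absurd h hV⟩ hne
        exact hbad (Set.mem_iUnion₂.2 ⟨k, Finset.mem_range.2 hk, hsym⟩)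
      by_cases hD : s ∈ D N
      · have hηa : η s = g a := by
          apply hη0
          intro k hk hWk
          exact hD.2 (Set.mem_iUnion₂.2 ⟨k, Finset.mem_range.2 hk,
            (hAB k) ((hAV k hk).2 hWk.1)⟩)
        have h2 : (D N).indicator (fun u => q (g u) + q (g a)) s = q (g s) + q (g a) :=
          Set.indicator_of_mem hD _
        calc q (g s - η s) = q (g s - g a) := by rw [hηa]
          _ ≤ q (g s) + q (g a) := map_sub_le_add q _ _
          _ ≤ GB s := by
              simp only [hGBdef, h2]
              have := hind_nonneg2 s
              linarith
      · obtain ⟨k, hk, hAk⟩ := hAcov s hs hD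
        have hWk : s ∈ W k := by
          refine ⟨(hAV k hk).1 hAk, fun hmem => ?_⟩
          obtain ⟨j, hj, hsj⟩ := Set.mem_iUnion₂.1 hmem
          have hj' : j < k := Finset.mem_range.1 hj
          exact hAdisj j k hj' s ((hAV j (lt_trans hj' hk)).2 hsj) hAk
        have hBk : q (g s - e k) < δ₁ := ((hAB k) hAk).2
        calc q (g s - η s) = q (g s - e k) := by rw [hηW k hk s hWk]
          _ ≤ δ₁ := hBk.le
          _ ≤ GB s := by
              simp only [hGBdef]
              have := hind_nonneg1 s
              have := hind_nonneg2 s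
              linarith
  -- integrability of the bound
  have hconst_int : IntegrableOn (fun _ : ℝ => δ₁) (Set.Icc a b) :=
    integrableOn_const measure_Icc_lt_top.ne
  have hint1 : IntegrableOn ((D N).indicator fun u => q (g u) + q (g a)) (Set.Icc a b) :=
    (hgint.add (integrableOn_const measure_Icc_lt_top.ne)).indicator (hDmeas N)
  have hint2 : IntegrableOn (bad'.indicator fun u => q (g u) + QM) (Set.Icc a b) :=
    (hgint.add (integrableOn_const measure_Icc_lt_top.ne)).indicator
      (hbadmeas.inter measurableSet_Icc)
  have hGBint : IntegrableOn GB (Set.Icc a b) := (hconst_int.add hint1).add hint2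
  have hmain : ∫ s in Set.Icc a b, q (γ s - η s) ≤ ∫ s in Set.Icc a b, GB s := by
    refine integral_mono_of_nonneg (ae_of_all _ fun s => apply_nonneg q _) hGBint ?_
    exact (ae_restrict_mem measurableSet_Icc).mono fun s hs => hpt s hs
  -- compute the integral of the bound
  have hIccvol : (volume (Set.Icc a b)).toReal = b - a := by
    rw [Real.volume_Icc, ENNReal.toReal_ofReal hba.le]
  have hsplit : ∫ s in Set.Icc a b, GB s
      = (∫ _ in Set.Icc a b, δ₁) + (∫ s in D N, (q (g s) + q (g a)))
        + ∫ s in bad', (q (g s) + QM) := by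
    have h12 : IntegrableOn
        (fun s => δ₁ + (D N).indicator (fun u => q (g u) + q (g a)) s) (Set.Icc a b) :=
      hconst_int.add hint1
    simp only [hGBdef]
    rw [integral_add h12 hint2, integral_add hconst_int hint1]
    congr 1
    · congr 1
      rw [integral_indicator (hDmeas N), Measure.restrict_restrict (hDmeas N),
        Set.inter_eq_left.2 hDIcc]
    · rw [integral_indicator (hbadmeas.inter measurableSet_Icc),
        Measure.restrict_restrict (hbadmeas.inter measurableSet_Icc),
        Set.inter_eq_left.2 Set.inter_subset_right]
  have hI1 : (∫ _ in Set.Icc a b, δ₁) = ε / 2 := by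
    rw [setIntegral_const, measureReal_def, hIccvol, smul_eq_mul, hδ₁def]
    field_simp
  -- second integral
  have hDint : IntegrableOn (fun s => q (g s)) (D N) := hgint.mono_set hDIcc
  have hDvol : (volume (D N)).toReal ≤ ε8 / (q (g a) + 1) := by
    refine ENNReal.toReal_le_of_le_ofReal (by positivity) ?_
    exact le_trans hDμ.le (min_le_right _ _)
  have hI2 : (∫ s in D N, (q (g s) + q (g a))) ≤ ε8 + ε8 := by
    rw [integral_add hDint (integrableOn_const
      ((measure_mono hDIcc).trans_lt measure_Icc_lt_top).ne)]
    have h21 : (∫ s in D N, q (g s)) < ε8 :=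
      hδ₀ (D N) hDIcc (hDmeas N) (lt_of_lt_of_le hDμ (min_le_left _ _))
    have h22 : (∫ _ in D N, q (g a)) ≤ ε8 := by
      rw [setIntegral_const, measureReal_def, smul_eq_mul]
      calc (volume (D N)).toReal * q (g a) ≤ (ε8 / (q (g a) + 1)) * (q (g a) + 1) := by
            apply mul_le_mul hDvol (by linarith) (apply_nonneg q _) (by positivity)
        _ = ε8 := by field_simp
    linarith
  -- third integral
  have hbad'Icc : bad' ⊆ Set.Icc a b := Set.inter_subset_right
  have hbad'meas : MeasurableSet bad' := hbadmeas.inter measurableSet_Icc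
  have hbad'μ : volume bad' < δ' := lt_of_le_of_lt (measure_mono Set.inter_subset_left) hbadμ
  have hbad'int : IntegrableOn (fun s => q (g s)) bad' := hgint.mono_set hbad'Icc
  have hbad'vol : (volume bad').toReal ≤ ε8 / (QM + 1) := by
    refine ENNReal.toReal_le_of_le_ofReal (by positivity) ?_
    exact le_trans hbad'μ.le (min_le_right _ _)
  have hI3 : (∫ s in bad', (q (g s) + QM)) ≤ ε8 + ε8 := by
    rw [integral_add hbad'int (integrableOn_const
      ((measure_mono hbad'Icc).trans_lt measure_Icc_lt_top).ne)]
    have h31 : (∫ s in bad', q (g s)) < ε8 :=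
      hδ₀ bad' hbad'Icc hbad'meas (lt_of_lt_of_le hbad'μ (min_le_left _ _))
    have h32 : (∫ _ in bad', QM) ≤ ε8 := by
      rw [setIntegral_const, measureReal_def, smul_eq_mul]
      calc (volume bad').toReal * QM ≤ (ε8 / (QM + 1)) * (QM + 1) := by
            apply mul_le_mul hbad'vol (by linarith) hQM0 (by positivity)
        _ = ε8 := by field_simp
    linarith
  refine ⟨η, hstair, fun x hx => ?_, ?_⟩
  · obtain ⟨s, _, rfl⟩ := hx
    exact hηS s
  · calc ∫ s in Set.Icc a b, q (γ s - η s) ≤ ∫ s in Set.Icc a b, GB s := hmain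
      _ = (∫ _ in Set.Icc a b, δ₁) + (∫ s in D N, (q (g s) + q (g a)))
          + ∫ s in bad', (q (g s) + QM) := hsplit
      _ ≤ ε / 2 + (ε8 + ε8) + (ε8 + ε8) := by
          rw [hI1]
          exact add_le_add (add_le_add le_rfl hI2) hI3
      _ ≤ ε := by rw [hε8def]; linarith
end

section
/- Let E be a Fréchet space, a < b real numbers, and γ : [a,b] → E an L¹-function. Then for every continuous seminorm q on E and every ε > 0, there exists a continuous function θ : [a,b] → E such that θ([a,b]) is contained in the convex hull of γ([a,b]) and ∫_[a,b] q(γ(t) − θ(t)) dt ≤ ε. -/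
open MeasureTheory Set Metric TopologicalSpace Filter


private lemma seminorm_sum_le {E : Type*} [AddCommGroup E] [Module ℝ E]
    (q : Seminorm ℝ E) (s : Finset ℕ) (f : ℕ → E) :
    q (∑ i ∈ s, f i) ≤ ∑ i ∈ s, q (f i) := by
  classical
  induction s using Finset.induction_on with
  | empty => simp
  | insert _ _ h ih =>
      rw [Finset.sum_insert h, Finset.sum_insert h]
      exact (map_add_le_add q _ _).trans (by linarith)

private lemma sum_le_one_of_disj {n : ℕ} {f : ℕ → ℝ} (h1 : ∀ k, f k ≤ 1)
    (hd : ∀ j k, j < n → k < n → j ≠ k → f j = 0 ∨ f k = 0) :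
    ∑ k ∈ Finset.range n, f k ≤ 1 := by
  induction n with
  | zero => simp
  | succ n ih =>
    rw [Finset.sum_range_succ]
    by_cases hn : f n = 0
    · rw [hn, add_zero]
      exact ih (fun j k hj hk hjk =>
        hd j k (hj.trans (Nat.lt_succ_self n)) (hk.trans (Nat.lt_succ_self n)) hjk)
    · have hz : ∀ j ∈ Finset.range n, f j = 0 := by
        intro j hj
        rcases hd j n (Finset.mem_range.1 hj |>.trans (Nat.lt_succ_self n)) (Nat.lt_succ_self n)
          (Finset.mem_range.1 hj).ne with h | h
        · exact h
        · exact absurd h hn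
      rw [Finset.sum_eq_zero hz, zero_add]
      exact h1 n

private lemma arith_eq1 (ε c : ℝ) (hc : c ≠ 0) : ε / (8 * c) * c = ε / 8 := by
  field_simp

private lemma arith_eq2 (ε c w : ℝ) (hc : 0 < c) (hw : 0 < w) :
    c * (w * (ε / (8 * w * c))) = ε / 8 := by
  field_simp

set_option maxHeartbeats 1000000 in
/-- Approximation of `L¹`-functions into a Fréchet space by continuous functions
with values in the convex hull of the image. -/
theorem continuous_approximation_L1
    {E : Type*} [AddCommGroup E] [UniformSpace E] [IsUniformAddGroup E]
    [Module ℝ E] [ContinuousSMul ℝ E] [LocallyConvexSpace ℝ E]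
    [CompleteSpace E] [TopologicalSpace.MetrizableSpace E]
    [MeasurableSpace E] [BorelSpace E]
    (a b : ℝ) (hab : a < b) (γ : ℝ → E)
    (hmeas : Measurable ((Set.Icc a b).restrict γ))
    (hsep : TopologicalSpace.IsSeparable (γ '' Set.Icc a b))
    (hint : ∀ q : Seminorm ℝ E, Continuous q →
      IntegrableOn (fun t => q (γ t)) (Set.Icc a b))
    (q : Seminorm ℝ E) (hq : Continuous q) (ε : ℝ) (hε : 0 < ε) :
    ∃ θ : ℝ → E, ContinuousOn θ (Set.Icc a b) ∧
      θ '' Set.Icc a b ⊆ convexHull ℝ (γ '' Set.Icc a b) ∧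
      ∫ t in Set.Icc a b, q (γ t - θ t) ≤ ε := by
  classical
  set S : Set E := γ '' Set.Icc a b with hS_def
  have hSne : S.Nonempty := ⟨γ a, ⟨a, Set.left_mem_Icc.2 hab.le, rfl⟩⟩
  -- a dense sequence in S
  obtain ⟨x, hxS, hxdense⟩ : ∃ x : ℕ → E, (∀ k, x k ∈ S) ∧ S ⊆ closure (Set.range x) := by
    have : SecondCountableTopology S := hsep.secondCountableTopology
    obtain ⟨u, hu_count, hu_dense⟩ := TopologicalSpace.exists_countable_dense S
    have : Nonempty S := hSne.to_subtype
    have hune : (Subtype.val '' u : Set E).Nonempty := (hu_dense.nonempty.image _)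
    obtain ⟨x, hx⟩ := (hu_count.image Subtype.val).exists_eq_range hune
    refine ⟨x, fun k => ?_, fun y hy => ?_⟩
    · have : x k ∈ Subtype.val '' u := hx ▸ Set.mem_range_self k
      exact Set.image_subset_iff.2 (fun z _ => z.2) this
    · have h1 : (⟨y, hy⟩ : S) ∈ closure u := hu_dense _
      have h2 : y ∈ closure (Subtype.val '' u) := closure_subtype.1 h1
      rwa [hx] at h2
  -- measurability transfer
  have hγpre : ∀ B : Set E, MeasurableSet B → MeasurableSet (γ ⁻¹' B ∩ Set.Icc a b) := by
    intro B hB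
    have h1 : MeasurableSet ((Set.Icc a b).restrict γ ⁻¹' B) := hmeas hB
    have h2 := (measurableSet_Icc (a := a) (b := b)).subtype_image h1
    have h3 : Subtype.val '' ((Set.Icc a b).restrict γ ⁻¹' B) = Set.Icc a b ∩ (γ ⁻¹' B) := by
      rw [show (Set.Icc a b).restrict γ ⁻¹' B = Subtype.val ⁻¹' (γ ⁻¹' B) from rfl,
        Subtype.image_preimage_coe]
    rw [h3, Set.inter_comm] at h2
    exact h2
  -- global modification of γ
  set γ' : ℝ → E := fun t => if t ∈ Set.Icc a b then γ t else γ a with hγ'def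
  have hγ'eq : Set.EqOn γ' γ (Set.Icc a b) := fun t ht => if_pos ht
  have hγ'mem : ∀ t, γ' t ∈ S := by
    intro t
    by_cases ht : t ∈ Set.Icc a b
    · rw [hγ'def]; simp only [if_pos ht]; exact ⟨t, ht, rfl⟩
    · rw [hγ'def]; simp only [if_neg ht]; exact ⟨a, Set.left_mem_Icc.2 hab.le, rfl⟩
  have hγ'meas : Measurable γ' := by
    intro B hB
    have hset : γ' ⁻¹' B =
        (γ ⁻¹' B ∩ Set.Icc a b) ∪ ((Set.Icc a b)ᶜ ∩ (if γ a ∈ B then Set.univ else ∅)) := by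
      ext t
      show (if t ∈ Set.Icc a b then γ t else γ a) ∈ B ↔ _
      by_cases ht : t ∈ Set.Icc a b
      · rw [if_pos ht]
        simp [ht]
      · rw [if_neg ht]
        by_cases ha : γ a ∈ B <;> simp [ht, ha]
    rw [hset]
    exact (hγpre B hB).union (measurableSet_Icc.compl.inter (by split <;> simp))
  have hγ'sm : StronglyMeasurable γ' :=
    stronglyMeasurable_iff_measurable_separable.2
      ⟨hγ'meas, hsep.mono (Set.range_subset_iff.2 hγ'mem)⟩
  have hqγ'int : IntegrableOn (fun t => q (γ' t)) (Set.Icc a b) :=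
    (hint q hq).congr_fun (fun t ht => by rw [hγ'eq ht]) measurableSet_Icc
  have hIccfin : volume (Set.Icc a b) ≠ ⊤ := by
    rw [Real.volume_Icc]; exact ENNReal.ofReal_ne_top
  -- δ
  set δ : ℝ := ε / (8 * (b - a)) with hδdef
  have hδpos : 0 < δ := div_pos hε (by linarith)
  -- the sets U and A
  set U : ℕ → Set ℝ := fun k => γ ⁻¹' {y | q (y - x k) < δ} ∩ Set.Icc a b with hUdef
  have hUmeas : ∀ k, MeasurableSet (U k) := fun k =>
    hγpre _ (isOpen_lt (hq.comp (continuous_id.sub continuous_const)) continuous_const).measurableSet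
  have hUsub : ∀ k, U k ⊆ Set.Icc a b := fun k => Set.inter_subset_right
  have hUq : ∀ k, ∀ t ∈ U k, q (γ t - x k) < δ := fun k t ht => ht.1
  set A : ℕ → Set ℝ := fun k => U k \ ⋃ j ∈ Finset.range k, U j with hAdef
  have hAmeas : ∀ k, MeasurableSet (A k) := fun k =>
    (hUmeas k).diff (Finset.measurableSet_biUnion _ (fun j _ => hUmeas j))
  have hAsubU : ∀ k, A k ⊆ U k := fun k => Set.diff_subset
  have hAsub : ∀ k, A k ⊆ Set.Icc a b := fun k => (hAsubU k).trans (hUsub k)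
  have hAdisj : ∀ j k, j ≠ k → Disjoint (A j) (A k) := by
    have key : ∀ j k, j < k → Disjoint (A j) (A k) := by
      intro j k h
      refine Set.disjoint_left.2 (fun t htj htk => htk.2 ?_)
      simp only [Set.mem_iUnion]
      exact ⟨j, Finset.mem_range.2 h, hAsubU j htj⟩
    intro j k hjk
    rcases lt_or_gt_of_ne hjk with h | h
    · exact key j k h
    · exact (key k j h).symm
  have hcoverA : ∀ t ∈ Set.Icc a b, ∃ k, t ∈ A k := by
    intro t ht
    have hmem : γ t ∈ closure (Set.range x) := hxdense ⟨t, ht, rfl⟩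
    have hopen : IsOpen {y | q (γ t - y) < δ} :=
      isOpen_lt (hq.comp (continuous_const.sub continuous_id)) continuous_const
    have h0 : γ t ∈ {y | q (γ t - y) < δ} := by
      simp only [Set.mem_setOf_eq, sub_self, map_zero]; exact hδpos
    obtain ⟨y, hy1, hy2⟩ := mem_closure_iff.1 hmem _ hopen h0
    obtain ⟨k, rfl⟩ := hy2
    have hex : ∃ k, t ∈ U k := ⟨k, ⟨hy1, ht⟩⟩
    refine ⟨Nat.find hex, Nat.find_spec hex, ?_⟩
    simp only [Set.mem_iUnion]
    rintro ⟨j, hj, hjU⟩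
    exact Nat.find_min hex (Finset.mem_range.1 hj) hjU
  -- the tails
  set T : ℕ → Set ℝ := fun m => Set.Icc a b \ ⋃ k ∈ Finset.range m, A k with hTdef
  have hTmeas : ∀ m, MeasurableSet (T m) := fun m =>
    measurableSet_Icc.diff (Finset.measurableSet_biUnion _ (fun j _ => hAmeas j))
  have hTsub : ∀ m, T m ⊆ Set.Icc a b := fun m => Set.diff_subset
  have hTanti : Antitone T := by
    intro m m' h
    exact Set.diff_subset_diff_right
      (Set.biUnion_subset_biUnion_left (Finset.coe_subset.2 (Finset.range_subset_range.2 h)))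
  have hTempty : ⋂ m, T m = ∅ := by
    ext t
    simp only [Set.mem_iInter, Set.mem_empty_iff_false, iff_false, not_forall]
    by_cases ht : t ∈ Set.Icc a b
    · obtain ⟨k, hk⟩ := hcoverA t ht
      refine ⟨k + 1, fun hT => hT.2 ?_⟩
      simp only [Set.mem_iUnion]
      exact ⟨k, Finset.mem_range.2 (Nat.lt_succ_self k), hk⟩
    · exact ⟨0, fun hT => ht hT.1⟩
  -- measure of tails tends to 0
  have hT0fin : volume (T 0) ≠ ⊤ := fun h => hIccfin (top_le_iff.1 (h ▸ measure_mono (hTsub 0)))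
  have hTtend : Tendsto (fun m => volume (T m)) atTop (nhds 0) := by
    have h := tendsto_measure_iInter_atTop (μ := volume)
      (fun m => (hTmeas m).nullMeasurableSet) hTanti ⟨0, hT0fin⟩
    rwa [hTempty, measure_empty] at h
  -- integrals over tails tend to 0
  have hqsm : StronglyMeasurable (fun t => q (γ' t)) := hq.comp_stronglyMeasurable hγ'sm
  have hTint : Tendsto (fun m => ∫ t in T m, q (γ' t)) atTop (nhds 0) := by
    have key := tendsto_integral_of_dominated_convergence
      (μ := volume.restrict (Set.Icc a b))
      (F := fun m t => (T m).indicator (fun s => q (γ' s)) t) (f := fun _ => 0)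
      (bound := fun t => q (γ' t))
      (fun m => (hqsm.indicator (hTmeas m)).aestronglyMeasurable)
      hqγ'int
      (fun m => ae_of_all _ (fun t => by
        show ‖(T m).indicator (fun s => q (γ' s)) t‖ ≤ q (γ' t)
        rw [Real.norm_eq_abs]
        by_cases ht : t ∈ T m
        · rw [Set.indicator_of_mem ht, abs_of_nonneg (apply_nonneg q _)]
        · rw [Set.indicator_of_notMem ht, abs_zero]
          exact apply_nonneg q _))
      ?_
    · have heq : ∀ m, ∫ t, (T m).indicator (fun s => q (γ' s)) t ∂(volume.restrict (Set.Icc a b))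
          = ∫ t in T m, q (γ' t) := by
        intro m
        rw [integral_indicator (hTmeas m), Measure.restrict_restrict (hTmeas m),
          Set.inter_eq_self_of_subset_left (hTsub m)]
      rw [integral_zero] at key
      exact (funext heq) ▸ key
    · filter_upwards [ae_restrict_mem measurableSet_Icc] with t ht
      obtain ⟨k, hk⟩ := hcoverA t ht
      apply tendsto_atTop_of_eventually_const (i₀ := k + 1)
      intro m hm
      have htm : t ∉ T m := by
        intro hT
        refine hT.2 ?_
        simp only [Set.mem_iUnion]
        exact ⟨k, Finset.mem_range.2 (lt_of_lt_of_le (Nat.lt_succ_self k) hm), hk⟩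
      exact Set.indicator_of_notMem htm _
  -- choose n
  obtain ⟨n, hn_int, hn_meas⟩ :
      ∃ n, (∫ t in T n, q (γ' t)) ≤ ε / 16 ∧ q (x 0) * (volume (T n)).toReal ≤ ε / 8 := by
    have h1 : ∀ᶠ m in atTop, (∫ t in T m, q (γ' t)) < ε / 16 :=
      hTint.eventually_lt_const (by linarith)
    have h2' : Tendsto (fun m => q (x 0) * (volume (T m)).toReal) atTop (nhds 0) := by
      have := (ENNReal.tendsto_toReal (by simp : (0 : ENNReal) ≠ ⊤)).comp hTtend
      simpa using this.const_mul (q (x 0))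
    have h2 : ∀ᶠ m in atTop, q (x 0) * (volume (T m)).toReal < ε / 8 :=
      h2'.eventually_lt_const (by linarith)
    obtain ⟨m, hm1, hm2⟩ := (h1.and h2).exists
    exact ⟨m, hm1.le, hm2.le⟩
  -- the bound M
  set M : ℝ := q (x 0) + ∑ k ∈ Finset.range n, q (x k) with hMdef
  have hMnonneg : 0 ≤ M :=
    add_nonneg (apply_nonneg q _) (Finset.sum_nonneg fun k _ => apply_nonneg q _)
  have hMk : ∀ k, k < n → q (x k) ≤ M := fun k hk =>
    (Finset.single_le_sum (f := fun j => q (x j)) (fun i _ => apply_nonneg q _)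
      (Finset.mem_range.2 hk)).trans (le_add_of_nonneg_left (apply_nonneg q _))
  have hM0 : q (x 0) ≤ M :=
    le_add_of_nonneg_right (Finset.sum_nonneg fun k _ => apply_nonneg q _)
  -- η and ζ
  set η : ℝ := ε / (8 * (n + 1) * (2 * M + δ + 1)) with hηdef
  have hηpos : 0 < η := div_pos hε (by positivity)
  set ζ : ℝ := ε / (8 * (n + 1) * (M + 1)) with hζdef
  have hζpos : 0 < ζ := div_pos hε (by positivity)
  -- compact subsets
  have hKex : ∀ k, ∃ C : Set ℝ, C ⊆ A k ∧ IsCompact C ∧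
      (k < n → volume (A k \ C) < ENNReal.ofReal η) := by
    intro k
    have hAfin : volume (A k) ≠ ⊤ :=
      fun h => hIccfin (top_le_iff.1 (h ▸ measure_mono (hAsub k)))
    obtain ⟨C, hC1, hC2, hC3⟩ := (hAmeas k).exists_isCompact_lt_add hAfin
      (ε := ENNReal.ofReal η) (ENNReal.ofReal_pos.2 hηpos).ne'
    exact ⟨C, hC1, hC2, fun _ => measure_diff_lt_of_lt_add
      hC2.measurableSet.nullMeasurableSet hC1 hC2.measure_lt_top.ne hC3⟩
  choose K hKsub hKcomp hKsmall using hKex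
  have hKdisj : ∀ j k, j ≠ k → Disjoint (K j) (K k) :=
    fun j k h => (hAdisj j k h).mono (hKsub j) (hKsub k)
  -- disjoint thickening radii
  have hdex : ∀ p : ℕ × ℕ, ∃ d : ℝ, 0 < d ∧
      (p.1 ≠ p.2 → Disjoint (thickening d (K p.1)) (thickening d (K p.2))) := by
    intro p
    by_cases hp : p.1 ≠ p.2
    · obtain ⟨d, hd1, hd2⟩ := (hKdisj p.1 p.2 hp).exists_thickenings (hKcomp p.1) (hKcomp p.2).isClosed
      exact ⟨d, hd1, fun _ => hd2⟩
    · exact ⟨1, one_pos, fun h => absurd h hp⟩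
  choose d hdpos hddisj using hdex
  -- cthickening measure radii
  have hρex : ∀ k, ∃ ρ : ℝ, 0 < ρ ∧
      volume (cthickening ρ (K k)) < volume (K k) + ENNReal.ofReal ζ := by
    intro k
    have h1 : Tendsto (fun ρ => volume (cthickening ρ (K k))) (nhds 0) (nhds (volume (K k))) :=
      tendsto_measure_cthickening_of_isClosed
        ⟨1, one_pos, ((hKcomp k).isBounded.cthickening.measure_lt_top).ne⟩ (hKcomp k).isClosed
    have h2 : volume (K k) < volume (K k) + ENNReal.ofReal ζ :=
      ENNReal.lt_add_right (hKcomp k).measure_lt_top.ne (ENNReal.ofReal_pos.2 hζpos).ne'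
    have h3 : ∀ᶠ ρ in nhdsWithin (0 : ℝ) (Set.Ioi 0),
        volume (cthickening ρ (K k)) < volume (K k) + ENNReal.ofReal ζ :=
      ((h1.eventually_lt_const h2).filter_mono nhdsWithin_le_nhds)
    obtain ⟨ρ, hρ1, hρ2⟩ := (h3.and self_mem_nhdsWithin).exists
    exact ⟨ρ, hρ2, hρ1⟩
  choose ρ hρpos hρsmall using hρex
  -- the common radius r
  set rs : Finset ℝ := insert 1 ((((Finset.range n) ×ˢ (Finset.range n)).image d) ∪
      (Finset.range n).image ρ) with hrsdef
  have hrsne : rs.Nonempty := ⟨1, Finset.mem_insert_self _ _⟩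
  set r : ℝ := rs.min' hrsne with hrdef
  have hrpos : 0 < r := by
    rw [hrdef, Finset.lt_min'_iff]
    intro y hy
    rw [hrsdef] at hy
    simp only [Finset.mem_insert, Finset.mem_union, Finset.mem_image] at hy
    rcases hy with h | ⟨p, _, rfl⟩ | ⟨k, _, rfl⟩
    · rw [h]; exact one_pos
    · exact hdpos p
    · exact hρpos k
  have hrle_d : ∀ j k, j < n → k < n → r ≤ d (j, k) := by
    intro j k hj hk
    refine Finset.min'_le _ _ ?_
    rw [hrsdef]
    simp only [Finset.mem_insert, Finset.mem_union, Finset.mem_image]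
    exact Or.inr (Or.inl ⟨(j, k), Finset.mem_product.2 ⟨Finset.mem_range.2 hj, Finset.mem_range.2 hk⟩, rfl⟩)
  have hrle_ρ : ∀ k, k < n → r ≤ ρ k := by
    intro k hk
    refine Finset.min'_le _ _ ?_
    rw [hrsdef]
    simp only [Finset.mem_insert, Finset.mem_union, Finset.mem_image]
    exact Or.inr (Or.inr ⟨k, Finset.mem_range.2 hk, rfl⟩)
  have hthick_disj : ∀ j k, j < n → k < n → j ≠ k →
      Disjoint (thickening r (K j)) (thickening r (K k)) := by
    intro j k hj hk hjk
    exact Disjoint.mono (thickening_mono (hrle_d j k hj hk) _) (thickening_mono (hrle_d j k hj hk) _)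
      (hddisj (j, k) hjk)
  have hthick_meas : ∀ k, k < n → volume (thickening r (K k) \ K k) < ENNReal.ofReal ζ := by
    intro k hk
    have h1 : volume (cthickening r (K k)) < volume (K k) + ENNReal.ofReal ζ :=
      lt_of_le_of_lt (measure_mono (cthickening_mono (hrle_ρ k hk) _)) (hρsmall k)
    have h2 := measure_diff_lt_of_lt_add (hKcomp k).measurableSet.nullMeasurableSet
      (self_subset_cthickening _) (hKcomp k).measure_lt_top.ne h1
    exact lt_of_le_of_lt
      (measure_mono (Set.diff_subset_diff_left (thickening_subset_cthickening _ _))) h2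
  -- the bump functions
  set φ : ℕ → ℝ → ℝ := fun k t => if (K k).Nonempty then max 0 (1 - infDist t (K k) / r) else 0
    with hφdef
  have hφcont : ∀ k, Continuous (φ k) := by
    intro k
    rw [hφdef]
    by_cases h : (K k).Nonempty
    · simp only [if_pos h]
      exact continuous_const.max
        (continuous_const.sub ((continuous_infDist_pt _).div_const r))
    · simp only [if_neg h]
      exact continuous_const
  have hφ0 : ∀ k t, 0 ≤ φ k t := by
    intro k t
    simp only [hφdef]
    split
    · exact le_max_left _ _
    · exact le_refl 0
  have hφ1 : ∀ k t, φ k t ≤ 1 := by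
    intro k t
    simp only [hφdef]
    split
    · exact max_le one_pos.le (by
        have h1 : 0 ≤ infDist t (K k) / r := div_nonneg infDist_nonneg hrpos.le
        linarith)
    · exact one_pos.le
  have hφone : ∀ k t, t ∈ K k → φ k t = 1 := by
    intro k t ht
    simp only [hφdef]
    rw [if_pos ⟨t, ht⟩, infDist_zero_of_mem ht, zero_div, sub_zero]
    exact max_eq_right one_pos.le
  have hφthick : ∀ k t, φ k t ≠ 0 → t ∈ thickening r (K k) := by
    intro k t h
    simp only [hφdef] at h
    by_cases hne : (K k).Nonempty
    · rw [if_pos hne] at h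
      have h1 : 0 < max 0 (1 - infDist t (K k) / r) := lt_of_le_of_ne (le_max_left _ _) (Ne.symm h)
      have h2 : 0 < 1 - infDist t (K k) / r := by
        rcases max_cases 0 (1 - infDist t (K k) / r) with ⟨he, _⟩ | ⟨he, _⟩
        · rw [he] at h1; exact absurd h1 (lt_irrefl 0)
        · rwa [he] at h1
      have h3 : infDist t (K k) < r := (div_lt_one hrpos).1 (by linarith)
      exact (mem_thickening_iff_infDist_lt hne).2 h3
    · rw [if_neg hne] at h
      exact absurd rfl h
  have hφdisjsupp : ∀ t j k, j < n → k < n → j ≠ k → φ j t = 0 ∨ φ k t = 0 := by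
    intro t j k hj hk hjk
    by_contra h
    push_neg at h
    exact Set.disjoint_left.1 (hthick_disj j k hj hk hjk) (hφthick j t h.1) (hφthick k t h.2)
  -- σ and θ
  set σ : ℝ → ℝ := fun t => ∑ k ∈ Finset.range n, φ k t with hσdef
  have hσle1 : ∀ t, σ t ≤ 1 := fun t =>
    sum_le_one_of_disj (fun k => hφ1 k t)
      (fun j k hj hk hjk => hφdisjsupp t j k hj hk hjk)
  have hσ0 : ∀ t, 0 ≤ σ t := fun t => Finset.sum_nonneg (fun k _ => hφ0 k t)
  have hσcont : Continuous σ := continuous_finset_sum _ (fun k _ => hφcont k)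
  set θ : ℝ → E := fun t => (∑ k ∈ Finset.range n, φ k t • x k) + (1 - σ t) • x 0 with hθdef
  have hθcont : Continuous θ :=
    (continuous_finset_sum _ fun k _ => (hφcont k).smul continuous_const).add
      ((continuous_const.sub hσcont).smul continuous_const)
  -- θ maps into the convex hull
  have hθhull : ∀ t, θ t ∈ convexHull ℝ S := by
    intro t
    have hrepr : θ t = ∑ k ∈ Finset.range (n + 1),
        (if k = n then 1 - σ t else φ k t) • (if k = n then x 0 else x k) := by
      show (∑ k ∈ Finset.range n, φ k t • x k) + (1 - σ t) • x 0 = _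
      rw [Finset.sum_range_succ, if_pos rfl, if_pos rfl]
      congr 1
      refine Finset.sum_congr rfl (fun k hk => ?_)
      rw [if_neg (Finset.mem_range.1 hk).ne, if_neg (Finset.mem_range.1 hk).ne]
    rw [hrepr]
    refine Convex.sum_mem (convex_convexHull ℝ S) (fun k _ => ?_) ?_
      (fun k _ => subset_convexHull ℝ S (by split <;> exact hxS _))
    · split
      · linarith [hσle1 t]
      · exact hφ0 _ t
    · rw [Finset.sum_range_succ, if_pos rfl,
        Finset.sum_congr rfl (fun k hk => if_neg (Finset.mem_range.1 hk).ne)]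
      rw [hσdef]
      ring
  -- the bound q (θ t) ≤ M
  have hθbound : ∀ t, q (θ t) ≤ M := by
    intro t
    have h1 : q (θ t) ≤ q (∑ k ∈ Finset.range n, φ k t • x k) + q ((1 - σ t) • x 0) :=
      map_add_le_add q _ _
    have h2 : q (∑ k ∈ Finset.range n, φ k t • x k) ≤ ∑ k ∈ Finset.range n, q (x k) := by
      refine (seminorm_sum_le q _ _).trans (Finset.sum_le_sum (fun k _ => ?_))
      rw [map_smul_eq_mul, Real.norm_eq_abs, abs_of_nonneg (hφ0 k t)]
      calc φ k t * q (x k) ≤ 1 * q (x k) :=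
            mul_le_mul_of_nonneg_right (hφ1 k t) (apply_nonneg q _)
        _ = q (x k) := one_mul _
    have h3 : q ((1 - σ t) • x 0) ≤ q (x 0) := by
      rw [map_smul_eq_mul, Real.norm_eq_abs, abs_of_nonneg (by linarith [hσle1 t])]
      calc (1 - σ t) * q (x 0) ≤ 1 * q (x 0) :=
            mul_le_mul_of_nonneg_right (by linarith [hσ0 t]) (apply_nonneg q _)
        _ = q (x 0) := one_mul _
    rw [hMdef]
    linarith
  -- θ equals x k on K k
  have hθK : ∀ k, k < n → ∀ t ∈ K k, θ t = x k := by
    intro k hk t ht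
    have hφk : φ k t = 1 := hφone k t ht
    have hφj : ∀ j, j < n → j ≠ k → φ j t = 0 := by
      intro j hj hjk
      by_contra h
      exact Set.disjoint_left.1 (hthick_disj j k hj hk hjk) (hφthick j t h)
        (self_subset_thickening hrpos _ ht)
    have hσt : σ t = 1 := by
      show ∑ j ∈ Finset.range n, φ j t = 1
      rw [Finset.sum_eq_single_of_mem k (Finset.mem_range.2 hk)
        (fun j hj hjk => hφj j (Finset.mem_range.1 hj) hjk)]
      exact hφk
    have hsum : ∑ j ∈ Finset.range n, φ j t • x j = x k := by
      rw [Finset.sum_eq_single_of_mem k (Finset.mem_range.2 hk)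
        (fun j hj hjk => by rw [hφj j (Finset.mem_range.1 hj) hjk, zero_smul])]
      rw [hφk, one_smul]
    show (∑ j ∈ Finset.range n, φ j t • x j) + (1 - σ t) • x 0 = x k
    rw [hsum, hσt, sub_self, zero_smul, add_zero]
  -- θ equals x 0 away from the thickenings
  have hθout : ∀ t, (∀ k, k < n → t ∉ thickening r (K k)) → θ t = x 0 := by
    intro t h
    have hφz : ∀ k, k < n → φ k t = 0 := by
      intro k hk
      by_contra hne
      exact h k hk (hφthick k t hne)
    have hσt : σ t = 0 := by
      show ∑ j ∈ Finset.range n, φ j t = 0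
      exact Finset.sum_eq_zero (fun k hk => hφz k (Finset.mem_range.1 hk))
    show (∑ j ∈ Finset.range n, φ j t • x j) + (1 - σ t) • x 0 = x 0
    rw [Finset.sum_eq_zero (fun k hk => by
      rw [hφz k (Finset.mem_range.1 hk), zero_smul]), hσt, sub_zero, one_smul, zero_add]
  -- integrability of the integrand
  have hconst_int : ∀ (c : ℝ) (s : Set ℝ), s ⊆ Set.Icc a b →
      IntegrableOn (fun _ => c) s := by
    intro c s hs
    exact integrableOn_const (lt_of_le_of_lt (measure_mono hs) hIccfin.lt_top).ne
  have hθsm : StronglyMeasurable θ := hθcont.stronglyMeasurable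
  have hfsm : StronglyMeasurable (fun t => q (γ' t - θ t)) :=
    hq.comp_stronglyMeasurable (hγ'sm.sub hθsm)
  have hsub_le : ∀ (u v : E), q (u - v) ≤ q u + q v := by
    intro u v
    rw [sub_eq_add_neg]
    exact (map_add_le_add q _ _).trans (by rw [map_neg_eq_map])
  have hfint : IntegrableOn (fun t => q (γ' t - θ t)) (Set.Icc a b) := by
    refine Integrable.mono' (g := fun t => q (γ' t) + M)
      (hqγ'int.add (hconst_int M _ subset_rfl))
      hfsm.aestronglyMeasurable (ae_of_all _ fun t => ?_)
    show ‖q (γ' t - θ t)‖ ≤ q (γ' t) + M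
    rw [Real.norm_eq_abs, abs_of_nonneg (apply_nonneg q _)]
    exact (hsub_le _ _).trans (by linarith [hθbound t])
  -- the pieces
  set G : Set ℝ := ⋃ k ∈ Finset.range n, K k with hGdef
  set Th : Set ℝ := ⋃ k ∈ Finset.range n, thickening r (K k) with hThdef
  set AU : Set ℝ := ⋃ k ∈ Finset.range n, A k with hAUdef
  have hGmeas : MeasurableSet G :=
    Finset.measurableSet_biUnion _ (fun k _ => (hKcomp k).measurableSet)
  have hThmeas : MeasurableSet Th :=
    (isOpen_biUnion (fun k _ => isOpen_thickening)).measurableSet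
  have hAUmeas : MeasurableSet AU := Finset.measurableSet_biUnion _ (fun k _ => hAmeas k)
  have hGsubAU : G ⊆ AU := Set.iUnion₂_mono (fun k _ => hKsub k)
  have hAUsub : AU ⊆ Set.Icc a b := Set.iUnion₂_subset (fun k _ => hAsub k)
  have hGsub : G ⊆ Set.Icc a b := hGsubAU.trans hAUsub
  set P2 : Set ℝ := AU \ G with hP2def
  set P3 : Set ℝ := T n ∩ Th with hP3def
  set P4 : Set ℝ := T n \ Th with hP4def
  have hP2meas : MeasurableSet P2 := hAUmeas.diff hGmeas
  have hP3meas : MeasurableSet P3 := (hTmeas n).inter hThmeas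
  have hP4meas : MeasurableSet P4 := (hTmeas n).diff hThmeas
  have hP2sub : P2 ⊆ Set.Icc a b := fun t ht => hAUsub ht.1
  have hP3subT : P3 ⊆ T n := fun t ht => ht.1
  have hP4subT : P4 ⊆ T n := fun t ht => ht.1
  have hP3sub : P3 ⊆ Set.Icc a b := hP3subT.trans (hTsub n)
  have hP4sub : P4 ⊆ Set.Icc a b := hP4subT.trans (hTsub n)
  have hTnfin : volume (T n) ≠ ⊤ :=
    fun h => hIccfin (top_le_iff.1 (h ▸ measure_mono (hTsub n)))
  -- decomposition
  have hdecomp : Set.Icc a b = G ∪ (P2 ∪ (P3 ∪ P4)) := by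
    ext t
    constructor
    · intro ht
      by_cases hA : t ∈ AU
      · by_cases hG : t ∈ G
        · exact Or.inl hG
        · exact Or.inr (Or.inl ⟨hA, hG⟩)
      · have htT : t ∈ T n := ⟨ht, hA⟩
        by_cases hTh : t ∈ Th
        · exact Or.inr (Or.inr (Or.inl ⟨htT, hTh⟩))
        · exact Or.inr (Or.inr (Or.inr ⟨htT, hTh⟩))
    · rintro (h | h | h | h)
      · exact hGsub h
      · exact hP2sub h
      · exact hP3sub h
      · exact hP4sub h
  have hD3 : Disjoint P3 P4 := Set.disjoint_left.2 (fun t h3 h4 => h4.2 h3.2)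
  have hD2 : Disjoint P2 (P3 ∪ P4) := Set.disjoint_left.2 (by
    rintro t h2 (h | h)
    · exact h.1.2 h2.1
    · exact h.1.2 h2.1)
  have hD1 : Disjoint G (P2 ∪ (P3 ∪ P4)) := Set.disjoint_left.2 (by
    rintro t hG (h | h | h)
    · exact h.2 hG
    · exact h.1.2 (hGsubAU hG)
    · exact h.1.2 (hGsubAU hG))
  have hfG : IntegrableOn (fun t => q (γ' t - θ t)) G := hfint.mono_set hGsub
  have hfP2 : IntegrableOn (fun t => q (γ' t - θ t)) P2 := hfint.mono_set hP2sub
  have hfP3 : IntegrableOn (fun t => q (γ' t - θ t)) P3 := hfint.mono_set hP3sub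
  have hfP4 : IntegrableOn (fun t => q (γ' t - θ t)) P4 := hfint.mono_set hP4sub
  have hsplit : ∫ t in Set.Icc a b, q (γ' t - θ t) =
      (∫ t in G, q (γ' t - θ t)) + ((∫ t in P2, q (γ' t - θ t)) +
        ((∫ t in P3, q (γ' t - θ t)) + (∫ t in P4, q (γ' t - θ t)))) := by
    have hf34 : IntegrableOn (fun t => q (γ' t - θ t)) (P3 ∪ P4) :=
      hfint.mono_set (Set.union_subset hP3sub hP4sub)
    have hf234 : IntegrableOn (fun t => q (γ' t - θ t)) (P2 ∪ (P3 ∪ P4)) :=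
      hfint.mono_set (Set.union_subset hP2sub (Set.union_subset hP3sub hP4sub))
    rw [hdecomp,
      setIntegral_union hD1 (hP2meas.union (hP3meas.union hP4meas)) hfG hf234,
      setIntegral_union hD2 (hP3meas.union hP4meas) hfP2 hf34,
      setIntegral_union hD3 hP4meas hfP3 hfP4]
  have htoReal_Icc : (volume (Set.Icc a b)).toReal = b - a := by
    rw [Real.volume_Icc, ENNReal.toReal_ofReal (by linarith)]
  -- bound on G
  have hB1 : ∫ t in G, q (γ' t - θ t) ≤ δ * (b - a) := by
    have h1 : ∫ t in G, q (γ' t - θ t) ≤ ∫ t in G, δ := by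
      refine setIntegral_mono_on hfG (hconst_int δ G hGsub) hGmeas (fun t ht => ?_)
      have ht0 := ht
      simp only [hGdef, Set.mem_iUnion] at ht
      obtain ⟨k, hk, htk⟩ := ht
      rw [hγ'eq (hGsub ht0), hθK k (Finset.mem_range.1 hk) t htk]
      exact (hUq k t (hAsubU k (hKsub k htk))).le
    have h2 : (∫ _ in G, (δ : ℝ)) = (volume G).toReal * δ := by
      rw [setIntegral_const, smul_eq_mul, Measure.real]
    have h3 : (volume G).toReal ≤ b - a := by
      rw [← htoReal_Icc]
      exact ENNReal.toReal_mono hIccfin (measure_mono hGsub)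
    calc ∫ t in G, q (γ' t - θ t) ≤ (volume G).toReal * δ := h2 ▸ h1
      _ ≤ (b - a) * δ := mul_le_mul_of_nonneg_right h3 hδpos.le
      _ = δ * (b - a) := mul_comm _ _
  -- bound on P2
  have hP2vol : (volume P2).toReal ≤ (n : ℝ) * η := by
    have hsub2 : P2 ⊆ ⋃ k ∈ Finset.range n, (A k \ K k) := by
      rintro t ⟨htA, htG⟩
      simp only [hAUdef, Set.mem_iUnion] at htA
      obtain ⟨k, hk, htk⟩ := htA
      simp only [Set.mem_iUnion]
      refine ⟨k, hk, htk, fun hK => htG ?_⟩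
      simp only [hGdef, Set.mem_iUnion]
      exact ⟨k, hk, hK⟩
    have h1 : volume P2 ≤ ENNReal.ofReal ((n : ℝ) * η) := by
      calc volume P2 ≤ ∑ k ∈ Finset.range n, volume (A k \ K k) :=
            le_trans (measure_mono hsub2) (measure_biUnion_finset_le _ _)
        _ ≤ ∑ _k ∈ Finset.range n, ENNReal.ofReal η :=
            Finset.sum_le_sum (fun k hk => (hKsmall k (Finset.mem_range.1 hk)).le)
        _ = (n : ℕ) * ENNReal.ofReal η := by
            rw [Finset.sum_const, Finset.card_range, nsmul_eq_mul]
        _ = ENNReal.ofReal ((n : ℝ) * η) := by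
            rw [ENNReal.ofReal_mul (by positivity), ENNReal.ofReal_natCast]
    exact ENNReal.toReal_le_of_le_ofReal (by positivity) h1
  have hB2 : ∫ t in P2, q (γ' t - θ t) ≤ (2 * M + δ) * ((n : ℝ) * η) := by
    have h1 : ∫ t in P2, q (γ' t - θ t) ≤ ∫ _t in P2, (2 * M + δ) := by
      refine setIntegral_mono_on hfP2 (hconst_int _ _ hP2sub) hP2meas (fun t ht => ?_)
      have htA := ht.1
      simp only [hAUdef, Set.mem_iUnion] at htA
      obtain ⟨k, hk, htk⟩ := htA
      have hkn := Finset.mem_range.1 hk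
      have hγq : q (γ' t) ≤ δ + M := by
        rw [hγ'eq (hAsub k htk)]
        have : q (γ t) = q ((γ t - x k) + x k) := by rw [sub_add_cancel]
        rw [this]
        exact (map_add_le_add q _ _).trans
          (add_le_add (hUq k t (hAsubU k htk)).le (hMk k hkn))
      exact (hsub_le _ _).trans (by linarith [hθbound t])
    have h2 : (∫ _t in P2, (2 * M + δ : ℝ)) = (volume P2).toReal * (2 * M + δ) := by
      rw [setIntegral_const, smul_eq_mul, Measure.real]
    calc ∫ t in P2, q (γ' t - θ t) ≤ (volume P2).toReal * (2 * M + δ) := h2 ▸ h1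
      _ ≤ ((n : ℝ) * η) * (2 * M + δ) :=
          mul_le_mul_of_nonneg_right hP2vol (by linarith)
      _ = (2 * M + δ) * ((n : ℝ) * η) := mul_comm _ _
  -- bound on P3
  have hP3vol : (volume P3).toReal ≤ (n : ℝ) * ζ := by
    have hsub3 : P3 ⊆ ⋃ k ∈ Finset.range n, (thickening r (K k) \ K k) := by
      rintro t ⟨htT, htTh⟩
      simp only [hThdef, Set.mem_iUnion] at htTh
      obtain ⟨k, hk, htk⟩ := htTh
      simp only [Set.mem_iUnion]
      refine ⟨k, hk, htk, fun hK => ?_⟩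
      exact htT.2 (by simp only [Set.mem_iUnion]; exact ⟨k, hk, hKsub k hK⟩)
    have h1 : volume P3 ≤ ENNReal.ofReal ((n : ℝ) * ζ) := by
      calc volume P3 ≤ ∑ k ∈ Finset.range n, volume (thickening r (K k) \ K k) :=
            le_trans (measure_mono hsub3) (measure_biUnion_finset_le _ _)
        _ ≤ ∑ _k ∈ Finset.range n, ENNReal.ofReal ζ :=
            Finset.sum_le_sum (fun k hk => (hthick_meas k (Finset.mem_range.1 hk)).le)
        _ = (n : ℕ) * ENNReal.ofReal ζ := by
            rw [Finset.sum_const, Finset.card_range, nsmul_eq_mul]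
        _ = ENNReal.ofReal ((n : ℝ) * ζ) := by
            rw [ENNReal.ofReal_mul (by positivity), ENNReal.ofReal_natCast]
    exact ENNReal.toReal_le_of_le_ofReal (by positivity) h1
  have hB3 : ∫ t in P3, q (γ' t - θ t) ≤ ε / 16 + M * ((n : ℝ) * ζ) := by
    have h1 : ∫ t in P3, q (γ' t - θ t) ≤ ∫ t in P3, (q (γ' t) + M) := by
      refine setIntegral_mono_on hfP3
        ((hqγ'int.mono_set hP3sub).add (hconst_int M _ hP3sub)) hP3meas (fun t _ => ?_)
      exact (hsub_le _ _).trans (by linarith [hθbound t])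
    have h2 : ∫ t in P3, (q (γ' t) + M) =
        (∫ t in P3, q (γ' t)) + ∫ _t in P3, (M : ℝ) :=
      integral_add (hqγ'int.mono_set hP3sub) (hconst_int M _ hP3sub)
    have h3 : ∫ t in P3, q (γ' t) ≤ ∫ t in T n, q (γ' t) :=
      setIntegral_mono_set (hqγ'int.mono_set (hTsub n))
        (ae_of_all _ (fun t => apply_nonneg q _)) (HasSubset.Subset.eventuallyLE hP3subT)
    have h4 : (∫ _t in P3, (M : ℝ)) = (volume P3).toReal * M := by
      rw [setIntegral_const, smul_eq_mul, Measure.real]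
    have h5 : (volume P3).toReal * M ≤ ((n : ℝ) * ζ) * M :=
      mul_le_mul_of_nonneg_right hP3vol hMnonneg
    calc ∫ t in P3, q (γ' t - θ t) ≤ (∫ t in P3, q (γ' t)) + ∫ _t in P3, (M : ℝ) := h2 ▸ h1
      _ ≤ (∫ t in T n, q (γ' t)) + ((n : ℝ) * ζ) * M := add_le_add h3 (h4 ▸ h5)
      _ ≤ ε / 16 + M * ((n : ℝ) * ζ) := by
          rw [mul_comm M _]
          exact add_le_add_left hn_int _
  -- bound on P4
  have hB4 : ∫ t in P4, q (γ' t - θ t) ≤ ε / 16 + q (x 0) * (volume (T n)).toReal := by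
    have h1 : ∫ t in P4, q (γ' t - θ t) ≤ ∫ t in P4, (q (γ' t) + q (x 0)) := by
      refine setIntegral_mono_on hfP4
        ((hqγ'int.mono_set hP4sub).add (hconst_int _ _ hP4sub)) hP4meas (fun t ht => ?_)
      have hθt : θ t = x 0 := by
        refine hθout t (fun k hk hmem => ht.2 ?_)
        simp only [hThdef, Set.mem_iUnion]
        exact ⟨k, Finset.mem_range.2 hk, hmem⟩
      rw [hθt]
      exact hsub_le _ _
    have h2 : ∫ t in P4, (q (γ' t) + q (x 0)) =
        (∫ t in P4, q (γ' t)) + ∫ _t in P4, (q (x 0) : ℝ) :=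
      integral_add (hqγ'int.mono_set hP4sub) (hconst_int _ _ hP4sub)
    have h3 : ∫ t in P4, q (γ' t) ≤ ∫ t in T n, q (γ' t) :=
      setIntegral_mono_set (hqγ'int.mono_set (hTsub n))
        (ae_of_all _ (fun t => apply_nonneg q _)) (HasSubset.Subset.eventuallyLE hP4subT)
    have h4 : (∫ _t in P4, (q (x 0) : ℝ)) = (volume P4).toReal * q (x 0) := by
      rw [setIntegral_const, smul_eq_mul, Measure.real]
    have h5 : (volume P4).toReal ≤ (volume (T n)).toReal :=
      ENNReal.toReal_mono hTnfin (measure_mono hP4subT)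
    calc ∫ t in P4, q (γ' t - θ t)
        ≤ (∫ t in P4, q (γ' t)) + ∫ _t in P4, (q (x 0) : ℝ) := h2 ▸ h1
      _ ≤ (∫ t in T n, q (γ' t)) + (volume (T n)).toReal * q (x 0) := by
          refine add_le_add h3 ?_
          rw [h4]
          exact mul_le_mul_of_nonneg_right h5 (apply_nonneg q _)
      _ ≤ ε / 16 + q (x 0) * (volume (T n)).toReal := by
          rw [mul_comm ((volume (T n)).toReal) _]
          exact add_le_add_left hn_int _
  -- arithmetic
  have hba : b - a ≠ 0 := by linarith
  have harith1 : δ * (b - a) = ε / 8 := by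
    rw [hδdef]
    exact arith_eq1 ε _ hba
  have harith2 : (2 * M + δ) * ((n : ℝ) * η) ≤ ε / 8 := by
    have h8 : (2 * M + δ + 1) * (((n : ℝ) + 1) * η) = ε / 8 := by
      rw [hηdef]
      exact arith_eq2 ε _ _ (by positivity) (by positivity)
    nlinarith [hηpos, hMnonneg, hδpos, Nat.cast_nonneg (α := ℝ) n,
      mul_nonneg (Nat.cast_nonneg (α := ℝ) n) hηpos.le]
  have harith3 : M * ((n : ℝ) * ζ) ≤ ε / 8 := by
    have h8 : (M + 1) * (((n : ℝ) + 1) * ζ) = ε / 8 := by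
      rw [hζdef]
      exact arith_eq2 ε _ _ (by positivity) (by positivity)
    nlinarith [hζpos, hMnonneg, Nat.cast_nonneg (α := ℝ) n,
      mul_nonneg (Nat.cast_nonneg (α := ℝ) n) hζpos.le]
  -- conclusion
  refine ⟨θ, hθcont.continuousOn, ?_, ?_⟩
  · rintro y ⟨t, -, rfl⟩
    exact hθhull t
  · have hcongr : ∫ t in Set.Icc a b, q (γ t - θ t) = ∫ t in Set.Icc a b, q (γ' t - θ t) :=
      setIntegral_congr_fun measurableSet_Icc (fun t ht => by rw [hγ'eq ht])
    rw [hcongr, hsplit]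
    have hB1' := hB1.trans harith1.le
    have hB2' := hB2.trans harith2
    have hB3' := hB3.trans (add_le_add_right harith3 _)
    have hB4' := hB4.trans (add_le_add_right hn_meas _)
    linarith only [hB1', hB2', hB3', hB4', hε]
end

section
/- Let E be a Fréchet space, J ⊆ ℝ a nondegenerate interval, and f : W → E a function on a subset W ⊆ J × E such that y'(t) = f(t, y(t)) satisfies both local existence and local uniqueness of Carathéodory solutions. Then for every (t₀, y₀) ∈ W, there exists a maximal Carathéodory solution γ : I → E to the initial value problem y'(t) = f(t,y(t)), y(t₀) = y₀, in the sense that every Carathéodory solution η : I_η → E of this initial value problem satisfies I_η ⊆ I and η = γ restricted to I_η. Moreover, I is relatively open in J. -/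
open MeasureTheory

section Defs

variable {E : Type*} [AddCommGroup E] [Module ℝ E] [TopologicalSpace E]
open MeasureTheory

section Defs

variable {E : Type*} [AddCommGroup E] [Module ℝ E] [TopologicalSpace E]

/-- Derivative of a curve into a topological vector space, within a set. -/
def HasTVSDerivWithinAt (η : ℝ → E) (v : E) (I : Set ℝ) (t : ℝ) : Prop :=
  Filter.Tendsto (fun s => (s - t)⁻¹ • (η s - η t)) (nhdsWithin t (I \ {t})) (nhds v)

/-- `γ` is an `L¹`-function on `[a,b]` with values in a Fréchet space: Borel
measurable, with separable image, and with integrable seminorm compositions. -/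
def IsL1On [MeasurableSpace E] (γ : ℝ → E) (a b : ℝ) : Prop :=
  Measurable ((Set.Icc a b).restrict γ) ∧
  TopologicalSpace.IsSeparable (γ '' Set.Icc a b) ∧
  ∀ q : Seminorm ℝ E, Continuous q →
    IntegrableOn (fun t => q (γ t)) (Set.Icc a b)

/-- `η` is absolutely continuous on `[a,b]`: it is a primitive (in the sense of
weak integrals) of an `L¹`-function. -/
def IsWeakACOn [MeasurableSpace E] (η : ℝ → E) (a b : ℝ) : Prop :=
  ∃ γ : ℝ → E, IsL1On γ a b ∧ ∀ l : E →L[ℝ] ℝ, ∀ t ∈ Set.Icc a b,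
    l (η t) = l (η a) + ∫ s in a..t, l (γ s)

/-- Absolute continuity on an arbitrary interval. -/
def IsACOn [MeasurableSpace E] (η : ℝ → E) (I : Set ℝ) : Prop :=
  Continuous (I.restrict η) ∧ ∀ a b : ℝ, a < b → Set.Icc a b ⊆ I → IsWeakACOn η a b

/-- A nondegenerate interval of `ℝ`. -/
def IsNondegenerateInterval (I : Set ℝ) : Prop :=
  I.OrdConnected ∧ ∃ x ∈ I, ∃ y ∈ I, x ≠ y

/-- Carathéodory solution on the interval `I` of `y' = f (t, y)` with graph in `W`. -/
def IsCaratheodorySol [MeasurableSpace E] (f : ℝ × E → E) (W : Set (ℝ × E))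
    (I : Set ℝ) (γ : ℝ → E) : Prop :=
  IsNondegenerateInterval I ∧ IsACOn γ I ∧ (∀ t ∈ I, (t, γ t) ∈ W) ∧
  ∀ᵐ t ∂volume, t ∈ I → HasTVSDerivWithinAt γ (f (t, γ t)) I t

/-- Local uniqueness of Carathéodory solutions: two solutions agreeing at a point
`t₀` of the intersection of their domains agree on an interval which is a
relatively open neighbourhood of `t₀` in that intersection. -/
def LocalUniquenessCar [MeasurableSpace E] (f : ℝ × E → E) (W : Set (ℝ × E)) : Prop :=
  ∀ I₁ I₂ : Set ℝ, ∀ γ₁ γ₂ : ℝ → E, IsCaratheodorySol f W I₁ γ₁ →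
    IsCaratheodorySol f W I₂ γ₂ → ∀ t₀ ∈ I₁ ∩ I₂, γ₁ t₀ = γ₂ t₀ →
    ∃ K : Set ℝ, K.OrdConnected ∧ t₀ ∈ K ∧
      (∃ U : Set ℝ, IsOpen U ∧ K = U ∩ (I₁ ∩ I₂)) ∧ Set.EqOn γ₁ γ₂ K

end Defs


/-- Local existence of Carathéodory solutions with respect to the interval `J`:
each initial condition in `W` admits a Carathéodory solution on a relatively
open subinterval of `J`. -/
def LocalExistenceCar [MeasurableSpace E] (f : ℝ × E → E) (W : Set (ℝ × E))
    (J : Set ℝ) : Prop :=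
  ∀ p ∈ W, ∃ (I : Set ℝ) (γ : ℝ → E),
    (∃ U : Set ℝ, IsOpen U ∧ I = U ∩ J) ∧ IsCaratheodorySol f W I γ ∧
    p.1 ∈ I ∧ γ p.1 = p.2

end Defs


section Aux
open Topology Filter Set
set_option linter.unusedSectionVars false

variable {E : Type*} [AddCommGroup E] [UniformSpace E] [IsUniformAddGroup E]
    [Module ℝ E] [ContinuousSMul ℝ E] [LocallyConvexSpace ℝ E]
    [CompleteSpace E] [TopologicalSpace.MetrizableSpace E]
    [MeasurableSpace E] [BorelSpace E]
    {f : ℝ × E → E} {W : Set (ℝ × E)}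

/-- union of two ord-connected sets with a common point is ord-connected -/
lemma ordConnected_union_of_mem {I₁ I₂ : Set ℝ} (h₁ : I₁.OrdConnected)
    (h₂ : I₂.OrdConnected) {c : ℝ} (hc₁ : c ∈ I₁) (hc₂ : c ∈ I₂) :
    (I₁ ∪ I₂).OrdConnected := by
  constructor
  rintro x (hx | hx) y (hy | hy) z hz
  · exact Or.inl (h₁.out hx hy hz)
  · rcases le_total z c with h | h
    · exact Or.inl (h₁.out hx hc₁ ⟨hz.1, h⟩)
    · exact Or.inr (h₂.out hc₂ hy ⟨h, hz.2⟩)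
  · rcases le_total z c with h | h
    · exact Or.inr (h₂.out hx hc₂ ⟨hz.1, h⟩)
    · exact Or.inl (h₁.out hc₁ hy ⟨h, hz.2⟩)
  · exact Or.inr (h₂.out hx hy hz)

/-- filter helper -/
lemma nhds_within_le_and_mem {α : Type*} [TopologicalSpace α] {S T V : Set α} {t : α}
    (hV : IsOpen V) (htV : t ∈ V) (h : S ∩ V ⊆ T) :
    nhdsWithin t S ≤ nhdsWithin t T ∧ T ∈ nhdsWithin t S := by
  have h1 : nhdsWithin t S = nhdsWithin t (S ∩ V) :=
    nhdsWithin_restrict'' S (mem_nhdsWithin_of_mem_nhds (hV.mem_nhds htV))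
  constructor
  · rw [h1]; exact nhdsWithin_mono t h
  · rw [h1]; exact Filter.mem_of_superset self_mem_nhdsWithin h

/-- if t ∈ I₁ \ I₂ (two ord-connected sets sharing c), a neighbourhood of t meets I₁∪I₂ inside I₁ -/
lemma exists_nbhd_inter_subset {I₁ I₂ : Set ℝ} (h₁ : I₁.OrdConnected)
    (h₂ : I₂.OrdConnected) {c t : ℝ} (hc₁ : c ∈ I₁) (hc₂ : c ∈ I₂)
    (ht : t ∈ I₁) (ht2 : t ∉ I₂) :
    ∃ V : Set ℝ, IsOpen V ∧ t ∈ V ∧ (I₁ ∪ I₂) ∩ V ⊆ I₁ := by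
  have htc : t ≠ c := fun h => ht2 (h ▸ hc₂)
  rcases htc.lt_or_gt with h | h
  · refine ⟨Set.Iio c, isOpen_Iio, h, ?_⟩
    rintro s ⟨hs | hs, hsV⟩
    · exact hs
    · -- s ∈ I₂, s < c. s ≤ t impossible would give t ∈ I₂? no: if s ≤ t then t ∈ [s,c] ⊆ I₂
      rcases le_total s t with hst | hst
      · exact absurd (h₂.out hs hc₂ ⟨hst, le_of_lt h⟩) ht2
      · exact h₁.out ht hc₁ ⟨hst, le_of_lt hsV⟩
  · refine ⟨Set.Ioi c, isOpen_Ioi, h, ?_⟩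
    rintro s ⟨hs | hs, hsV⟩
    · exact hs
    · rcases le_total t s with hst | hst
      · exact absurd (h₂.out hc₂ hs ⟨le_of_lt h, hst⟩) ht2
      · exact h₁.out hc₁ ht ⟨le_of_lt hsV, hst⟩

lemma hasTVSDeriv_congr {η δ : ℝ → E} {v : E} {S : Set ℝ} {t : ℝ}
    (h : HasTVSDerivWithinAt η v S t) (heq : Set.EqOn δ η S) (ht : δ t = η t) :
    HasTVSDerivWithinAt δ v S t := by
  refine Filter.Tendsto.congr' ?_ h
  filter_upwards [self_mem_nhdsWithin] with s hs
  rw [heq hs.1, ht]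

lemma hasTVSDeriv_union {δ : ℝ → E} {v : E} {I₁ I₂ : Set ℝ} {t : ℝ}
    (h1 : HasTVSDerivWithinAt δ v I₁ t) (h2 : HasTVSDerivWithinAt δ v I₂ t) :
    HasTVSDerivWithinAt δ v (I₁ ∪ I₂) t := by
  unfold HasTVSDerivWithinAt at *
  rw [Set.union_diff_distrib, nhdsWithin_union]
  exact Filter.Tendsto.sup h1 h2

lemma hasTVSDeriv_of_nbhd {η δ : ℝ → E} {v : E} {S T V : Set ℝ} {t : ℝ}
    (h : HasTVSDerivWithinAt η v T t) (hV : IsOpen V) (htV : t ∈ V)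
    (hsub : S ∩ V ⊆ T) (heq : Set.EqOn δ η T) (heqt : δ t = η t) :
    HasTVSDerivWithinAt δ v S t := by
  have hsub' : (S \ {t}) ∩ V ⊆ T \ {t} := fun s hs => ⟨hsub ⟨hs.1.1, hs.2⟩, hs.1.2⟩
  obtain ⟨hle, hmem⟩ := nhds_within_le_and_mem hV htV hsub'
  refine Filter.Tendsto.congr' ?_ (h.mono_left hle)
  filter_upwards [hmem] with s hs
  rw [heq hs.1, heqt]


/-- Two solutions agreeing at a common point agree on the intersection of domains. -/
lemma sol_eqOn (huniq : LocalUniquenessCar f W) {I₁ I₂ : Set ℝ} {γ₁ γ₂ : ℝ → E}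
    (h₁ : IsCaratheodorySol f W I₁ γ₁) (h₂ : IsCaratheodorySol f W I₂ γ₂)
    {c : ℝ} (hc : c ∈ I₁ ∩ I₂) (hγc : γ₁ c = γ₂ c) :
    Set.EqOn γ₁ γ₂ (I₁ ∩ I₂) := by
  have hord : (I₁ ∩ I₂).OrdConnected := h₁.1.1.inter h₂.1.1
  have hpre : IsPreconnected (I₁ ∩ I₂) := hord.isPreconnected
  haveI := Subtype.preconnectedSpace hpre
  set A : Set (I₁ ∩ I₂ : Set ℝ) := {x | γ₁ x = γ₂ x} with hA
  have hcont1 : Continuous fun x : (I₁ ∩ I₂ : Set ℝ) => γ₁ x := by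
    have h := continuousOn_iff_continuous_restrict.mpr h₁.2.1.1
    exact continuousOn_iff_continuous_restrict.mp (h.mono Set.inter_subset_left)
  have hcont2 : Continuous fun x : (I₁ ∩ I₂ : Set ℝ) => γ₂ x := by
    have h := continuousOn_iff_continuous_restrict.mpr h₂.2.1.1
    exact continuousOn_iff_continuous_restrict.mp (h.mono Set.inter_subset_right)
  have hclosed : IsClosed A := isClosed_eq hcont1 hcont2
  have hopen : IsOpen A := by
    rw [isOpen_iff_forall_mem_open]
    intro x hx
    obtain ⟨K, -, hxK, ⟨U, hU, hKU⟩, hKeq⟩ :=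
      huniq I₁ I₂ γ₁ γ₂ h₁ h₂ x x.2 hx
    refine ⟨Subtype.val ⁻¹' U, ?_, hU.preimage continuous_subtype_val, ?_⟩
    · intro y hy
      exact hKeq (by rw [hKU]; exact ⟨hy, y.2⟩)
    · rw [hKU] at hxK; exact hxK.1
  have huniv : A = Set.univ :=
    (IsClopen.eq_univ ⟨hclosed, hopen⟩) ⟨⟨c, hc⟩, hγc⟩
  intro t ht
  have : (⟨t, ht⟩ : (I₁ ∩ I₂ : Set ℝ)) ∈ A := huniv ▸ Set.mem_univ _
  exact this

lemma isL1On_integrableOn_clm {g : ℝ → E} {a b : ℝ} (hg : IsL1On g a b) (l : E →L[ℝ] ℝ) :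
    IntegrableOn (fun s => l (g s)) (Set.Icc a b) := by
  have hae : AEMeasurable g (volume.restrict (Set.Icc a b)) :=
    (aemeasurable_restrict_iff_comap_subtype measurableSet_Icc).mpr hg.1.aemeasurable
  have hsm : AEStronglyMeasurable (fun s => l (g s)) (volume.restrict (Set.Icc a b)) :=
    (l.continuous.measurable.comp_aemeasurable hae).aestronglyMeasurable
  have hqc : Continuous ((normSeminorm ℝ ℝ).comp (l : E →ₗ[ℝ] ℝ) : Seminorm ℝ E) := by
    have : ⇑((normSeminorm ℝ ℝ).comp (l : E →ₗ[ℝ] ℝ) : Seminorm ℝ E) = fun x => ‖l x‖ := by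
      funext x; simp [Seminorm.comp_apply]
    rw [this]
    exact continuous_norm.comp l.continuous
  have hint := hg.2.2 _ hqc
  refine hint.mono' hsm (MeasureTheory.ae_of_all _ fun s => ?_)
  simp [Seminorm.comp_apply]

lemma isWeakACOn_congr {η δ : ℝ → E} {a b : ℝ} (hab : a ≤ b) (h : IsWeakACOn η a b)
    (heq : Set.EqOn δ η (Set.Icc a b)) : IsWeakACOn δ a b := by
  obtain ⟨g, hg, hid⟩ := h
  exact ⟨g, hg, fun l t ht => by
    rw [heq ht, heq (Set.left_mem_Icc.mpr hab)]; exact hid l t ht⟩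

lemma isWeakACOn_trans {η : ℝ → E} {a c b : ℝ} (hac : a < c) (hcb : c < b)
    (h₁ : IsWeakACOn η a c) (h₂ : IsWeakACOn η c b) : IsWeakACOn η a b := by
  classical
  obtain ⟨g₁, hg₁, hid₁⟩ := h₁
  obtain ⟨g₂, hg₂, hid₂⟩ := h₂
  set g : ℝ → E := fun s => if s ≤ c then g₁ s else g₂ s with hgdef
  have hicc : Set.Icc a b = Set.Icc a c ∪ Set.Icc c b :=
    (Set.Icc_union_Icc_eq_Icc hac.le hcb.le).symm
  have hmeas : Measurable ((Set.Icc a b).restrict g) := by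
    have hm1 : Measurable fun x : (Set.Icc a b) => g₁ (min (x : ℝ) c) := by
      have hc1 : Continuous fun x : (Set.Icc a b) =>
          (⟨min (x : ℝ) c, ⟨le_min x.2.1 hac.le, min_le_right _ _⟩⟩ : (Set.Icc a c)) :=
        Continuous.subtype_mk (continuous_subtype_val.min continuous_const) _
      exact hg₁.1.comp hc1.measurable
    have hm2 : Measurable fun x : (Set.Icc a b) => g₂ (max (x : ℝ) c) := by
      have hc2 : Continuous fun x : (Set.Icc a b) =>
          (⟨max (x : ℝ) c, ⟨le_max_right _ _, max_le x.2.2 hcb.le⟩⟩ : (Set.Icc c b)) :=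
        Continuous.subtype_mk (continuous_subtype_val.max continuous_const) _
      exact hg₂.1.comp hc2.measurable
    have heqr : (Set.Icc a b).restrict g = fun x : (Set.Icc a b) =>
        if (x : ℝ) ≤ c then g₁ (min (x : ℝ) c) else g₂ (max (x : ℝ) c) := by
      funext x
      by_cases h : (x : ℝ) ≤ c
      · simp [Set.restrict, hgdef, h, min_eq_left h]
      · simp [Set.restrict, hgdef, h, max_eq_left (le_of_not_ge h)]
    rw [heqr]
    exact Measurable.ite (measurableSet_Iic.preimage measurable_subtype_coe) hm1 hm2
  have hsep : TopologicalSpace.IsSeparable (g '' Set.Icc a b) := by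
    refine (hg₁.2.1.union hg₂.2.1).mono ?_
    rintro x ⟨s, hs, rfl⟩
    by_cases h : s ≤ c
    · exact Or.inl ⟨s, ⟨hs.1, h⟩, by simp [hgdef, h]⟩
    · exact Or.inr ⟨s, ⟨(not_le.mp h).le, hs.2⟩, by simp [hgdef, h]⟩
  have hq : ∀ q : Seminorm ℝ E, Continuous q →
      IntegrableOn (fun t => q (g t)) (Set.Icc a b) := by
    intro q hqc
    rw [hicc]
    refine MeasureTheory.IntegrableOn.union ?_ ?_
    · exact (hg₁.2.2 q hqc).congr_fun (fun s hs => by simp [hgdef, hs.2]) measurableSet_Icc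
    · have h1 : ∀ᵐ s : ℝ, s ≠ c := by
        rw [MeasureTheory.ae_iff]
        convert Real.volume_singleton (a := c) using 2
        ext x; simp
      have h0 : ∀ᵐ s ∂(volume.restrict (Set.Icc c b)),
          q (g₂ s) = q (g s) := by
        filter_upwards [ae_restrict_mem measurableSet_Icc,
          ae_mono Measure.restrict_le_self h1] with s hs hne
        have hnle : ¬ (s ≤ c) := fun h => hne (le_antisymm h hs.1)
        simp [hgdef, hnle]
      exact (hg₂.2.2 q hqc).congr h0
  have hL1 : IsL1On g a b := ⟨hmeas, hsep, hq⟩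
  refine ⟨g, hL1, ?_⟩
  intro l t ht
  have hgint : IntegrableOn (fun s => l (g s)) (Set.Icc a b) :=
    isL1On_integrableOn_clm hL1 l
  have hii : ∀ u v : ℝ, u ∈ Set.Icc a b → v ∈ Set.Icc a b → u ≤ v →
      IntervalIntegrable (fun s => l (g s)) volume u v := by
    intro u v hu hv huv
    refine IntegrableOn.intervalIntegrable ?_
    rw [Set.uIcc_of_le huv]
    exact hgint.mono_set (Set.Icc_subset_Icc hu.1 hv.2)
  have ha : a ∈ Set.Icc a b := ⟨le_refl a, (hac.trans hcb).le⟩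
  have hc : c ∈ Set.Icc a b := ⟨hac.le, hcb.le⟩
  rcases le_total t c with htc | htc
  · rw [hid₁ l t ⟨ht.1, htc⟩]
    congr 1
    refine intervalIntegral.integral_congr fun s hs => ?_
    rw [Set.uIcc_of_le ht.1] at hs
    simp only [hgdef]; rw [if_pos (hs.2.trans htc)]
  · have h2 := hid₂ l t ⟨htc, ht.2⟩
    have h1 := hid₁ l c (Set.right_mem_Icc.mpr hac.le)
    have e2 : ∫ s in c..t, l (g₂ s) = ∫ s in c..t, l (g s) := by
      refine intervalIntegral.integral_congr_ae (MeasureTheory.ae_of_all _ fun s hs => ?_)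
      rw [Set.uIoc_of_le htc] at hs
      simp only [hgdef]; rw [if_neg (not_le.mpr hs.1)]
    have e1 : ∫ s in a..c, l (g₁ s) = ∫ s in a..c, l (g s) := by
      refine intervalIntegral.integral_congr fun s hs => ?_
      rw [Set.uIcc_of_le hac.le] at hs
      simp only [hgdef]; rw [if_pos hs.2]
    have hadd : (∫ s in a..c, l (g s)) + (∫ s in c..t, l (g s)) = ∫ s in a..t, l (g s) :=
      intervalIntegral.integral_add_adjacent_intervals (hii a c ha hc hac.le)
        (hii c t hc ht htc)
    rw [h2, h1, e1, e2, add_assoc, hadd]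

/-- Gluing two solutions that agree at a common point. -/
lemma glue_sol (huniq : LocalUniquenessCar f W) {I₁ I₂ : Set ℝ} {γ₁ γ₂ : ℝ → E}
    (h₁ : IsCaratheodorySol f W I₁ γ₁) (h₂ : IsCaratheodorySol f W I₂ γ₂)
    {c : ℝ} (hc₁ : c ∈ I₁) (hc₂ : c ∈ I₂) (hγc : γ₁ c = γ₂ c) :
    ∃ δ : ℝ → E, IsCaratheodorySol f W (I₁ ∪ I₂) δ ∧
      Set.EqOn δ γ₁ I₁ ∧ Set.EqOn δ γ₂ I₂ := by
  classical
  have heqI : Set.EqOn γ₁ γ₂ (I₁ ∩ I₂) := sol_eqOn huniq h₁ h₂ ⟨hc₁, hc₂⟩ hγc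
  set δ : ℝ → E := fun t => if t ∈ I₁ then γ₁ t else γ₂ t with hδ
  have he1 : Set.EqOn δ γ₁ I₁ := fun t ht => by simp [hδ, ht]
  have he2 : Set.EqOn δ γ₂ I₂ := fun t ht => by
    by_cases h : t ∈ I₁
    · simp only [hδ]; rw [if_pos h]; exact heqI ⟨h, ht⟩
    · simp [hδ, h]
  obtain ⟨ho₁, hAC₁, hW₁, hd₁⟩ := h₁
  obtain ⟨ho₂, hAC₂, hW₂, hd₂⟩ := h₂
  have hord : (I₁ ∪ I₂).OrdConnected := ordConnected_union_of_mem ho₁.1 ho₂.1 hc₁ hc₂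
  have hco₁ : ContinuousOn γ₁ I₁ := continuousOn_iff_continuous_restrict.mpr hAC₁.1
  have hco₂ : ContinuousOn γ₂ I₂ := continuousOn_iff_continuous_restrict.mpr hAC₂.1
  refine ⟨δ, ⟨⟨hord, ?_⟩, ⟨?_, ?_⟩, ?_, ?_⟩, he1, he2⟩
  · obtain ⟨x, hx, y, hy, hxy⟩ := ho₁.2
    exact ⟨x, Or.inl hx, y, Or.inl hy, hxy⟩
  · refine continuousOn_iff_continuous_restrict.mp ?_
    intro t ht
    by_cases ht1 : t ∈ I₁ <;> by_cases ht2 : t ∈ I₂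
    · exact ((hco₁ t ht1).congr he1 (he1 ht1)).union ((hco₂ t ht2).congr he2 (he2 ht2))
    · obtain ⟨V, hV, htV, hsub⟩ := exists_nbhd_inter_subset ho₁.1 ho₂.1 hc₁ hc₂ ht1 ht2
      obtain ⟨hle, hmem⟩ := nhds_within_le_and_mem hV htV hsub
      have h1 : Filter.Tendsto γ₁ (nhdsWithin t (I₁ ∪ I₂)) (nhds (γ₁ t)) :=
        (hco₁ t ht1).mono_left hle
      have h2 : Filter.Tendsto δ (nhdsWithin t (I₁ ∪ I₂)) (nhds (γ₁ t)) := by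
        refine Filter.Tendsto.congr' ?_ h1
        filter_upwards [hmem] with s hs
        exact (he1 hs).symm
      unfold ContinuousWithinAt
      rw [he1 ht1]
      exact h2
    · obtain ⟨V, hV, htV, hsub⟩ := exists_nbhd_inter_subset ho₂.1 ho₁.1 hc₂ hc₁ ht2 ht1
      have hsub' : (I₁ ∪ I₂) ∩ V ⊆ I₂ := by rw [Set.union_comm]; exact hsub
      obtain ⟨hle, hmem⟩ := nhds_within_le_and_mem hV htV hsub'
      have h1 : Filter.Tendsto γ₂ (nhdsWithin t (I₁ ∪ I₂)) (nhds (γ₂ t)) :=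
        (hco₂ t ht2).mono_left hle
      have h2 : Filter.Tendsto δ (nhdsWithin t (I₁ ∪ I₂)) (nhds (γ₂ t)) := by
        refine Filter.Tendsto.congr' ?_ h1
        filter_upwards [hmem] with s hs
        exact (he2 hs).symm
      unfold ContinuousWithinAt
      rw [he2 ht2]
      exact h2
    · exact absurd ht (by simp [ht1, ht2])
  · intro a b hab hsub
    by_cases hG1 : Set.Icc a b ⊆ I₁
    · exact isWeakACOn_congr hab.le (hAC₁.2 a b hab hG1) (fun s hs => he1 (hG1 hs))
    by_cases hG2 : Set.Icc a b ⊆ I₂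
    · exact isWeakACOn_congr hab.le (hAC₂.2 a b hab hG2) (fun s hs => he2 (hG2 hs))
    have ha := hsub (Set.left_mem_Icc.mpr hab.le)
    have hb := hsub (Set.right_mem_Icc.mpr hab.le)
    have hac : a < c := by
      by_contra h
      push_neg at h
      rcases hb with hb | hb
      · exact hG1 fun s hs => ho₁.1.out hc₁ hb ⟨h.trans hs.1, hs.2⟩
      · exact hG2 fun s hs => ho₂.1.out hc₂ hb ⟨h.trans hs.1, hs.2⟩
    have hcb : c < b := by
      by_contra h
      push_neg at h
      rcases ha with ha | ha
      · exact hG1 fun s hs => ho₁.1.out ha hc₁ ⟨hs.1, hs.2.trans h⟩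
      · exact hG2 fun s hs => ho₂.1.out ha hc₂ ⟨hs.1, hs.2.trans h⟩
    have hpart1 : IsWeakACOn δ a c := by
      rcases ha with ha | ha
      · have hs1 : Set.Icc a c ⊆ I₁ := fun s hs => ho₁.1.out ha hc₁ hs
        exact isWeakACOn_congr hac.le (hAC₁.2 a c hac hs1) (fun s hs => he1 (hs1 hs))
      · have hs2 : Set.Icc a c ⊆ I₂ := fun s hs => ho₂.1.out ha hc₂ hs
        exact isWeakACOn_congr hac.le (hAC₂.2 a c hac hs2) (fun s hs => he2 (hs2 hs))
    have hpart2 : IsWeakACOn δ c b := by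
      rcases hb with hb | hb
      · have hs1 : Set.Icc c b ⊆ I₁ := fun s hs => ho₁.1.out hc₁ hb hs
        exact isWeakACOn_congr hcb.le (hAC₁.2 c b hcb hs1) (fun s hs => he1 (hs1 hs))
      · have hs2 : Set.Icc c b ⊆ I₂ := fun s hs => ho₂.1.out hc₂ hb hs
        exact isWeakACOn_congr hcb.le (hAC₂.2 c b hcb hs2) (fun s hs => he2 (hs2 hs))
    exact isWeakACOn_trans hac hcb hpart1 hpart2
  · rintro t (ht | ht)
    · rw [he1 ht]; exact hW₁ t ht
    · rw [he2 ht]; exact hW₂ t ht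
  · filter_upwards [hd₁, hd₂] with t hdt1 hdt2 ht
    by_cases ht1 : t ∈ I₁ <;> by_cases ht2 : t ∈ I₂
    · have e1 : HasTVSDerivWithinAt δ (f (t, δ t)) I₁ t := by
        rw [he1 ht1]
        exact hasTVSDeriv_congr (hdt1 ht1) he1 (he1 ht1)
      have e2 : HasTVSDerivWithinAt δ (f (t, δ t)) I₂ t := by
        rw [he2 ht2]
        exact hasTVSDeriv_congr (hdt2 ht2) he2 (he2 ht2)
      exact hasTVSDeriv_union e1 e2
    · obtain ⟨V, hV, htV, hsub⟩ := exists_nbhd_inter_subset ho₁.1 ho₂.1 hc₁ hc₂ ht1 ht2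
      rw [he1 ht1]
      exact hasTVSDeriv_of_nbhd (hdt1 ht1) hV htV hsub he1 (he1 ht1)
    · obtain ⟨V, hV, htV, hsub⟩ := exists_nbhd_inter_subset ho₂.1 ho₁.1 hc₂ hc₁ ht2 ht1
      have hsub' : (I₁ ∪ I₂) ∩ V ⊆ I₂ := by rw [Set.union_comm]; exact hsub
      rw [he2 ht2]
      exact hasTVSDeriv_of_nbhd (hdt2 ht2) hV htV hsub' he2 (he2 ht2)
    · exact absurd ht (by simp [ht1, ht2])

end Aux

/-- Existence of maximal Carathéodory solutions, given local existence and local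
uniqueness; the domain of the maximal solution is relatively open in `J`. -/
theorem exists_maximal_caratheodory_solution
    {E : Type*} [AddCommGroup E] [UniformSpace E] [IsUniformAddGroup E]
    [Module ℝ E] [ContinuousSMul ℝ E] [LocallyConvexSpace ℝ E]
    [CompleteSpace E] [TopologicalSpace.MetrizableSpace E]
    [MeasurableSpace E] [BorelSpace E]
    (J : Set ℝ) (hJ : IsNondegenerateInterval J)
    (f : ℝ × E → E) (W : Set (ℝ × E)) (hW : ∀ p ∈ W, p.1 ∈ J)
    (hex : LocalExistenceCar f W J) (huniq : LocalUniquenessCar f W)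
    (t₀ : ℝ) (y₀ : E) (hty : (t₀, y₀) ∈ W) :
    ∃ (I : Set ℝ) (γ : ℝ → E),
      (∃ U : Set ℝ, IsOpen U ∧ I = U ∩ J) ∧
      IsCaratheodorySol f W I γ ∧ t₀ ∈ I ∧ γ t₀ = y₀ ∧
      ∀ (I' : Set ℝ) (η : ℝ → E), IsCaratheodorySol f W I' η → t₀ ∈ I' →
        η t₀ = y₀ → I' ⊆ I ∧ Set.EqOn η γ I' := by
  classical
  set Sol : Set (Set ℝ × (ℝ → E)) :=
    {p | IsCaratheodorySol f W p.1 p.2 ∧ t₀ ∈ p.1 ∧ p.2 t₀ = y₀} with hSol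
  set I : Set ℝ := {t | ∃ p ∈ Sol, t ∈ p.1} with hI
  set γ : ℝ → E := fun t => if h : ∃ p ∈ Sol, t ∈ p.1 then h.choose.2 t else y₀ with hγ
  have huniqpt : ∀ p ∈ Sol, ∀ q ∈ Sol, ∀ t, t ∈ p.1 → t ∈ q.1 → p.2 t = q.2 t := by
    intro p hp q hq t htp htq
    exact sol_eqOn huniq hp.1 hq.1 ⟨hp.2.1, hq.2.1⟩ (hp.2.2.trans hq.2.2.symm) ⟨htp, htq⟩
  have hγeq : ∀ p ∈ Sol, ∀ t ∈ p.1, γ t = p.2 t := by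
    intro p hp t ht
    have h : ∃ p ∈ Sol, t ∈ p.1 := ⟨p, hp, ht⟩
    simp only [hγ]
    rw [dif_pos h]
    exact huniqpt h.choose h.choose_spec.1 p hp t h.choose_spec.2 ht
  obtain ⟨I₀, γ₀, hI₀open, hsol₀, ht₀, hγ₀⟩ := hex (t₀, y₀) hty
  have hp₀ : (I₀, γ₀) ∈ Sol := ⟨hsol₀, ht₀, hγ₀⟩
  have ht₀I : t₀ ∈ I := ⟨(I₀, γ₀), hp₀, ht₀⟩
  have hγt₀ : γ t₀ = y₀ := (hγeq _ hp₀ t₀ ht₀).trans hγ₀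
  have hsubI : ∀ p ∈ Sol, p.1 ⊆ I := fun p hp t ht => ⟨p, hp, ht⟩
  have hglue : ∀ p ∈ Sol, ∀ q ∈ Sol, ∃ r ∈ Sol, r.1 = p.1 ∪ q.1 := by
    intro p hp q hq
    obtain ⟨δ, hδsol, hδ1, -⟩ :=
      glue_sol huniq hp.1 hq.1 hp.2.1 hq.2.1 (hp.2.2.trans hq.2.2.symm)
    exact ⟨(p.1 ∪ q.1, δ), ⟨hδsol, Or.inl hp.2.1, by
      show δ t₀ = y₀
      rw [show δ t₀ = p.2 t₀ from hδ1 hp.2.1]; exact hp.2.2⟩, rfl⟩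
  have hIord : I.OrdConnected := by
    constructor
    rintro x ⟨p, hp, hxp⟩ y ⟨q, hq, hyq⟩ z hz
    obtain ⟨r, hr, hre⟩ := hglue p hp q hq
    refine hsubI r hr ?_
    rw [hre]
    exact (ordConnected_union_of_mem hp.1.1.1 hq.1.1.1 hp.2.1 hq.2.1).out
      (Or.inl hxp) (Or.inr hyq) hz
  have hdom : ∀ a ∈ I, ∀ b ∈ I, ∃ r ∈ Sol, Set.Icc a b ⊆ r.1 ∧ a ∈ r.1 ∧ b ∈ r.1 := by
    intro a ha b hb
    obtain ⟨p, hp, hap⟩ := ha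
    obtain ⟨q, hq, hbq⟩ := hb
    obtain ⟨r, hr, hre⟩ := hglue p hp q hq
    have hao : a ∈ r.1 := hre ▸ Or.inl hap
    have hbo : b ∈ r.1 := hre ▸ Or.inr hbq
    exact ⟨r, hr, fun s hs => hr.1.1.1.out hao hbo hs, hao, hbo⟩
  have hcoSol : ∀ p ∈ Sol, ContinuousOn p.2 p.1 := fun p hp =>
    continuousOn_iff_continuous_restrict.mpr hp.1.2.1.1
  have hlocal : ∀ t ∈ I, ∃ r ∈ Sol, ∃ V : Set ℝ,
      IsOpen V ∧ t ∈ V ∧ I ∩ V ⊆ r.1 ∧ t ∈ r.1 := by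
    intro t ht
    have hleft : ∃ a ∈ I, a ≤ t ∧ ∃ lo : ℝ, lo < t ∧ ∀ s ∈ I, lo < s → a ≤ s := by
      by_cases hA : ∃ s ∈ I, s < t
      · obtain ⟨a, haI, hat⟩ := hA
        exact ⟨a, haI, hat.le, a, hat, fun s _ hs => hs.le⟩
      · push_neg at hA
        exact ⟨t, ht, le_refl t, t - 1, by linarith, fun s hsI _ => hA s hsI⟩
    have hright : ∃ b ∈ I, t ≤ b ∧ ∃ hi : ℝ, t < hi ∧ ∀ s ∈ I, s < hi → s ≤ b := by
      by_cases hB : ∃ s ∈ I, t < s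
      · obtain ⟨b, hbI, htb⟩ := hB
        exact ⟨b, hbI, htb.le, b, htb, fun s _ hs => hs.le⟩
      · push_neg at hB
        exact ⟨t, ht, le_refl t, t + 1, by linarith, fun s hsI _ => hB s hsI⟩
    obtain ⟨a, haI, hat, lo, hlo, hloP⟩ := hleft
    obtain ⟨b, hbI, htb, hi, hhi, hhiP⟩ := hright
    obtain ⟨r, hr, hrsub, har, hbr⟩ := hdom a haI b hbI
    refine ⟨r, hr, Set.Ioo lo hi, isOpen_Ioo, ⟨hlo, hhi⟩, ?_, hrsub ⟨hat, htb⟩⟩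
    rintro s ⟨hsI, hslo, hshi⟩
    exact hrsub ⟨hloP s hsI hslo, hhiP s hsI hshi⟩
  have hcont : ContinuousOn γ I := by
    intro t ht
    obtain ⟨r, hr, V, hV, htV, hsub, htr⟩ := hlocal t ht
    obtain ⟨hle, hmem⟩ := nhds_within_le_and_mem hV htV hsub
    have h1 : Filter.Tendsto r.2 (nhdsWithin t I) (nhds (r.2 t)) :=
      (hcoSol r hr t htr).mono_left hle
    have h2 : Filter.Tendsto γ (nhdsWithin t I) (nhds (r.2 t)) := by
      refine Filter.Tendsto.congr' ?_ h1
      filter_upwards [hmem] with s hs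
      exact (hγeq r hr s hs).symm
    unfold ContinuousWithinAt
    rw [hγeq r hr t htr]
    exact h2
  have hwac : ∀ a b : ℝ, a < b → Set.Icc a b ⊆ I → IsWeakACOn γ a b := by
    intro a b hab hsub
    have ha := hsub (Set.left_mem_Icc.mpr hab.le)
    have hb := hsub (Set.right_mem_Icc.mpr hab.le)
    obtain ⟨r, hr, hrsub, -, -⟩ := hdom a ha b hb
    exact isWeakACOn_congr hab.le (hr.1.2.1.2 a b hab hrsub)
      (fun s hs => hγeq r hr s (hrsub hs))
  have hgraph : ∀ t ∈ I, (t, γ t) ∈ W := by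
    intro t ht
    obtain ⟨p, hp, htp⟩ := ht
    rw [hγeq p hp t htp]
    exact hp.1.2.2.1 t htp
  have hderiv : ∀ᵐ t ∂volume, t ∈ I → HasTVSDerivWithinAt γ (f (t, γ t)) I t := by
    set sI : I × I → Set ℝ := fun q => Set.Ioo (q.1 : ℝ) (q.2 : ℝ) with hsI
    obtain ⟨T, hTc, hTeq⟩ := TopologicalSpace.isOpen_iUnion_countable sI
      (fun q => isOpen_Ioo)
    have hgood : ∀ q : I × I, ∀ᵐ t ∂volume, t ∈ sI q → t ∈ I →
        HasTVSDerivWithinAt γ (f (t, γ t)) I t := by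
      rintro ⟨⟨a, haI⟩, ⟨b, hbI⟩⟩
      obtain ⟨r, hr, hrsub, -, -⟩ := hdom a haI b hbI
      filter_upwards [hr.1.2.2.2] with t hdt hts htI
      simp only [hsI] at hts
      have htr : t ∈ r.1 := hrsub ⟨hts.1.le, hts.2.le⟩
      rw [hγeq r hr t htr]
      refine hasTVSDeriv_of_nbhd (hdt htr) isOpen_Ioo hts ?_
        (fun u hu => hγeq r hr u hu) (hγeq r hr t htr)
      exact fun u hu => hrsub ⟨hu.2.1.le, hu.2.2.le⟩
    have hminS : Set.Subsingleton {t | t ∈ I ∧ ∀ s' ∈ I, t ≤ s'} := by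
      rintro x ⟨hxI, hx⟩ y ⟨hyI, hy⟩
      exact le_antisymm (hx y hyI) (hy x hxI)
    have hmaxS : Set.Subsingleton {t | t ∈ I ∧ ∀ s' ∈ I, s' ≤ t} := by
      rintro x ⟨hxI, hx⟩ y ⟨hyI, hy⟩
      exact le_antisymm (hy x hxI) (hx y hyI)
    have hminAE : ∀ᵐ t ∂volume, t ∉ {t | t ∈ I ∧ ∀ s' ∈ I, t ≤ s'} :=
      (MeasureTheory.measure_eq_zero_iff_ae_notMem).mp (hminS.measure_zero _)
    have hmaxAE : ∀ᵐ t ∂volume, t ∉ {t | t ∈ I ∧ ∀ s' ∈ I, s' ≤ t} :=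
      (MeasureTheory.measure_eq_zero_iff_ae_notMem).mp (hmaxS.measure_zero _)
    have hT : ∀ᵐ t ∂volume, ∀ q ∈ T, t ∈ sI q → t ∈ I →
        HasTVSDerivWithinAt γ (f (t, γ t)) I t :=
      (MeasureTheory.ae_ball_iff hTc).mpr (fun q _ => hgood q)
    filter_upwards [hT, hminAE, hmaxAE] with t hTt hmin' hmax' htI
    by_cases hA : ∃ u ∈ I, u < t
    · by_cases hB : ∃ u ∈ I, t < u
      · obtain ⟨u, huI, hut⟩ := hA
        obtain ⟨v, hvI, htv⟩ := hB
        have hmem : t ∈ ⋃ q, sI q := Set.mem_iUnion.mpr ⟨(⟨u, huI⟩, ⟨v, hvI⟩), hut, htv⟩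
        rw [← hTeq] at hmem
        obtain ⟨q, hqT, hq⟩ := Set.mem_iUnion₂.mp hmem
        exact hTt q hqT hq htI
      · push_neg at hB
        exact absurd ⟨htI, fun s' hs' => hB s' hs'⟩ hmax'
    · push_neg at hA
      exact absurd ⟨htI, fun s' hs' => hA s' hs'⟩ hmin'
  have hsolI : IsCaratheodorySol f W I γ := by
    refine ⟨⟨hIord, ?_⟩, ⟨continuousOn_iff_continuous_restrict.mp hcont, hwac⟩,
      hgraph, hderiv⟩
    obtain ⟨x, hx, y, hy, hxy⟩ := hsol₀.1.2
    exact ⟨x, hsubI _ hp₀ hx, y, hsubI _ hp₀ hy, hxy⟩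
  have hmax : ∀ (I' : Set ℝ) (η : ℝ → E), IsCaratheodorySol f W I' η → t₀ ∈ I' →
      η t₀ = y₀ → I' ⊆ I ∧ Set.EqOn η γ I' := by
    intro I' η hsol' ht' hy'
    have hp' : (I', η) ∈ Sol := ⟨hsol', ht', hy'⟩
    exact ⟨hsubI _ hp', fun t ht => (hγeq _ hp' t ht).symm⟩
  have hop : ∃ U : Set ℝ, IsOpen U ∧ I = U ∩ J := by
    have hchoice : ∀ t : I, ∃ U : Set ℝ, IsOpen U ∧ (t : ℝ) ∈ U ∧ U ∩ J ⊆ I := by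
      rintro ⟨t, ht⟩
      obtain ⟨It, ζ, ⟨U, hUo, hUe⟩, hζsol, htζ, hζt⟩ := hex (t, γ t) (hgraph t ht)
      obtain ⟨δ, hδsol, hδ1, -⟩ := glue_sol huniq hsolI hζsol ht htζ hζt.symm
      have hrSol : (I ∪ It, δ) ∈ Sol := ⟨hδsol, Or.inl ht₀I, by
        show δ t₀ = y₀
        rw [show δ t₀ = γ t₀ from hδ1 ht₀I]; exact hγt₀⟩
      have hItI : It ⊆ I := fun s hs => hsubI _ hrSol (Or.inr hs)
      refine ⟨U, hUo, ?_, ?_⟩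
      · have := htζ
        rw [hUe] at this
        exact this.1
      · rw [← hUe]; exact hItI
    choose Ufun hUo hUm hUsub using hchoice
    refine ⟨⋃ t : I, Ufun t, isOpen_iUnion hUo, Set.Subset.antisymm ?_ ?_⟩
    · intro t ht
      exact ⟨Set.mem_iUnion.mpr ⟨⟨t, ht⟩, hUm ⟨t, ht⟩⟩, hW (t, γ t) (hgraph t ht)⟩
    · rintro s ⟨hsU, hsJ⟩
      obtain ⟨t, hst⟩ := Set.mem_iUnion.mp hsU
      exact hUsub t ⟨hst, hsJ⟩
  exact ⟨I, γ, hop, hsolI, ht₀I, hγt₀, hmax⟩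
end

section
/- Let E be a locally convex space, (Z, ‖·‖) a Banach space, U ⊆ E open, K ⊆ U compact, and f : U → Z a C¹-map. Then there exist a continuous seminorm P on E with K + B^P_1(0) ⊆ U and a constant such that, for each continuous seminorm p ≥ P on E, f satisfies the Lipschitz estimate ‖f(z) − f(y)‖ ≤ p(z − y) for all y, z in the open set V_p := K + B^p_1(0). -/
open Filter Set Topology

section Aux

variable {E : Type*} [AddCommGroup E] [Module ℝ E]
    {Z : Type*} [NormedAddCommGroup Z] [NormedSpace ℝ Z]
    {U : Set E} {f : E → Z} {df : E × E → Z}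

theorem aux_df_zero
    (hderiv : ∀ x ∈ U, ∀ y : E,
      Filter.Tendsto (fun τ : ℝ => τ⁻¹ • (f (x + τ • y) - f x))
        (nhdsWithin 0 {(0 : ℝ)}ᶜ) (nhds (df (x, y))))
    {x : E} (hx : x ∈ U) : df (x, (0 : E)) = 0 := by
  have h := hderiv x hx 0
  have heq : (fun τ : ℝ => τ⁻¹ • (f (x + τ • (0 : E)) - f x)) = fun _ : ℝ => (0 : Z) := by
    funext τ; simp
  rw [heq] at h
  exact tendsto_nhds_unique h tendsto_const_nhds

theorem aux_df_homog
    (hderiv : ∀ x ∈ U, ∀ y : E,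
      Filter.Tendsto (fun τ : ℝ => τ⁻¹ • (f (x + τ • y) - f x))
        (nhdsWithin 0 {(0 : ℝ)}ᶜ) (nhds (df (x, y))))
    {x : E} (hx : x ∈ U) (v : E) {c : ℝ} (hc : 0 < c) :
    df (x, c • v) = c • df (x, v) := by
  have h1 := hderiv x hx (c • v)
  have h2 := hderiv x hx v
  have hmap : Tendsto (fun τ : ℝ => c * τ) (𝓝[≠] (0 : ℝ)) (𝓝[≠] (0 : ℝ)) := by
    refine Tendsto.inf ?_ ?_
    · simpa using (tendsto_id.const_mul c : Tendsto (fun τ : ℝ => c * τ) (𝓝 0) (𝓝 (c * 0)))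
    · refine tendsto_principal_principal.mpr fun τ hτ => ?_
      simp only [mem_compl_iff, mem_singleton_iff] at hτ ⊢
      exact mul_ne_zero hc.ne' hτ
  have h3 := (h2.comp hmap).const_smul c
  have heq : (fun τ : ℝ => c • ((fun τ : ℝ => τ⁻¹ • (f (x + τ • v) - f x)) (c * τ)))
      = fun τ : ℝ => τ⁻¹ • (f (x + τ • (c • v)) - f x) := by
    funext τ
    have hv : τ • (c • v) = (c * τ) • v := by rw [smul_smul, mul_comm]
    rw [hv, smul_smul, mul_inv, ← mul_assoc, mul_inv_cancel₀ hc.ne', one_mul]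
  rw [show (fun τ : ℝ => c • ((fun τ : ℝ => τ⁻¹ • (f (x + τ • v) - f x)) ∘
    (fun τ : ℝ => c * τ)) τ) = (fun τ : ℝ => c • ((fun τ : ℝ => τ⁻¹ • (f (x + τ • v) - f x)) (c * τ))) from rfl, heq] at h3
  exact tendsto_nhds_unique h1 h3

end Aux

theorem aux_local_seminorm
    {E : Type*} [AddCommGroup E] [Module ℝ E] [TopologicalSpace E]
    [IsTopologicalAddGroup E] [ContinuousSMul ℝ E] [LocallyConvexSpace ℝ E]
    {Z : Type*} [NormedAddCommGroup Z] [NormedSpace ℝ Z]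
    {U : Set E} (hU : IsOpen U) {f : E → Z} (hf : ContinuousOn f U)
    {df : E × E → Z} (hdf : ContinuousOn df (U ×ˢ Set.univ))
    (hdf0 : ∀ x ∈ U, df (x, (0 : E)) = 0)
    {k : E} (hk : k ∈ U) {M : ℝ} (hM : ‖f k‖ + 1 ≤ M) :
    ∃ q : Seminorm ℝ E, Continuous q ∧
      ∀ x : E, q (x - k) < 1 → x ∈ U ∧ ‖f x‖ ≤ M ∧ ∀ v : E, q v < 1 → ‖df (x, v)‖ ≤ 1 := by
  have hcont : ContinuousAt df (k, 0) :=
    hdf.continuousAt ((hU.prod isOpen_univ).mem_nhds ⟨hk, trivial⟩)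
  have h1 : df ⁻¹' Metric.ball 0 1 ∈ 𝓝 ((k, 0) : E × E) := by
    refine hcont.preimage_mem_nhds ?_
    rw [hdf0 k hk]
    exact Metric.ball_mem_nhds 0 one_pos
  obtain ⟨A, hA, B, hB, hAB⟩ := mem_nhds_prod_iff.mp h1
  have hfc : ContinuousAt f k := hf.continuousAt (hU.mem_nhds hk)
  have h2 : f ⁻¹' Metric.ball (f k) 1 ∈ 𝓝 k :=
    hfc.preimage_mem_nhds (Metric.ball_mem_nhds _ one_pos)
  have hN : A ∩ (f ⁻¹' Metric.ball (f k) 1) ∩ U ∈ 𝓝 k :=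
    inter_mem (inter_mem hA h2) (hU.mem_nhds hk)
  have hS : ((fun v : E => k + v) ⁻¹' (A ∩ (f ⁻¹' Metric.ball (f k) 1) ∩ U)) ∩ B ∈ 𝓝 0 := by
    refine inter_mem ?_ hB
    have := (continuous_add_left k).continuousAt (x := (0 : E))
    refine this.preimage_mem_nhds ?_
    simpa using hN
  obtain ⟨W, ⟨hW0, hWopen, hWbal, hWconv⟩, hWsub⟩ :=
    (nhds_hasBasis_absConvex_open ℝ E).mem_iff.mp hS
  have habs : Absorbent ℝ W := absorbent_nhds_zero (hWopen.mem_nhds hW0)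
  refine ⟨gaugeSeminorm hWbal hWconv habs, ?_, ?_⟩
  · refine Seminorm.continuous (r := 1) ?_
    rw [gaugeSeminorm_ball_one hWopen]
    exact hWopen.mem_nhds hW0
  · have hmem : ∀ w : E, gaugeSeminorm hWbal hWconv habs w < 1 ↔ w ∈ W := by
      intro w
      constructor
      · intro hw
        have : w ∈ (gaugeSeminorm hWbal hWconv habs).ball 0 1 := by
          simpa [Seminorm.mem_ball_zero] using hw
        rwa [gaugeSeminorm_ball_one hWopen] at this
      · intro hw; exact gaugeSeminorm_lt_one_of_isOpen hWopen hw
    intro x hx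
    have hxW : x - k ∈ W := (hmem _).mp hx
    have hxS := hWsub hxW
    have hxN : x ∈ A ∩ (f ⁻¹' Metric.ball (f k) 1) ∩ U := by
      have := hxS.1
      simpa using this
    refine ⟨hxN.2, ?_, ?_⟩
    · have h3 : ‖f x - f k‖ < 1 := by
        have := hxN.1.2
        simpa [Metric.mem_ball, dist_eq_norm] using this
      calc ‖f x‖ = ‖f x - f k + f k‖ := by rw [sub_add_cancel]
        _ ≤ ‖f x - f k‖ + ‖f k‖ := norm_add_le _ _
        _ ≤ M := by linarith
    · intro v hv
      have hvW : v ∈ W := (hmem _).mp hv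
      have hmem2 : (x, v) ∈ A ×ˢ B := ⟨hxN.1.1, (hWsub hvW).2⟩
      have := hAB hmem2
      simp only [mem_preimage, Metric.mem_ball, dist_zero_right] at this
      exact this.le

/-- A `C¹`-map (in the sense of Keller's `C¹_c`-theory) from an open subset of a
locally convex space into a Banach space satisfies, near any compact subset `K`
of its domain, the Lipschitz estimate `‖f z − f y‖ ≤ p (z − y)` on the
`p`-neighbourhood `V_p = K + B^p_1(0)`, for every continuous seminorm `p ≥ P`,
where `P` is a suitable continuous seminorm with `K + B^P_1(0) ⊆ U`. -/
theorem lipschitz_seminorm_estimate_of_C1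
    {E : Type*} [AddCommGroup E] [Module ℝ E] [TopologicalSpace E]
    [IsTopologicalAddGroup E] [ContinuousSMul ℝ E] [LocallyConvexSpace ℝ E]
    {Z : Type*} [NormedAddCommGroup Z] [NormedSpace ℝ Z] [CompleteSpace Z]
    (U : Set E) (hU : IsOpen U) (K : Set E) (hK : IsCompact K) (hKU : K ⊆ U)
    (f : E → Z) (hf : ContinuousOn f U)
    (df : E × E → Z) (hdf : ContinuousOn df (U ×ˢ Set.univ))
    (hderiv : ∀ x ∈ U, ∀ y : E,
      Filter.Tendsto (fun τ : ℝ => τ⁻¹ • (f (x + τ • y) - f x))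
        (nhdsWithin 0 {(0 : ℝ)}ᶜ) (nhds (df (x, y)))) :
    ∃ P : Seminorm ℝ E, Continuous P ∧
      (∀ x : E, (∃ k ∈ K, P (x - k) < 1) → x ∈ U) ∧
      ∀ p : Seminorm ℝ E, Continuous p → (∀ x, P x ≤ p x) →
        ∀ y z : E, (∃ k ∈ K, p (y - k) < 1) → (∃ k ∈ K, p (z - k) < 1) →
          ‖f z - f y‖ ≤ p (z - y) := by
  rcases K.eq_empty_or_nonempty with rfl | ⟨k₀, hk₀⟩
  · refine ⟨0, ?_, ?_, ?_⟩
    · have : ⇑(0 : Seminorm ℝ E) = fun _ => (0 : ℝ) := rfl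
      rw [this]; exact continuous_const
    · rintro x ⟨k, hk, -⟩; exact absurd hk (Set.notMem_empty k)
    · rintro p - - y z ⟨k, hk, -⟩ -; exact absurd hk (Set.notMem_empty k)
  have hdf0 : ∀ x ∈ U, df (x, (0 : E)) = 0 := fun x hx => aux_df_zero hderiv hx
  -- bound for ‖f‖ on K
  set M₀ : ℝ := sSup ((fun x => ‖f x‖) '' K) with hM₀def
  have hbdd : BddAbove ((fun x => ‖f x‖) '' K) :=
    (hK.image_of_continuousOn ((hf.mono hKU).norm)).bddAbove
  have hM₀ : ∀ k ∈ K, ‖f k‖ ≤ M₀ := fun k hk => le_csSup hbdd ⟨k, hk, rfl⟩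
  set M : ℝ := M₀ + 1 with hMdef
  have hM₀nonneg : 0 ≤ M₀ := le_trans (norm_nonneg _) (hM₀ k₀ hk₀)
  have hMpos : 0 < M := by positivity
  -- local seminorms
  have key : ∀ k (hk : k ∈ K), ∃ q : Seminorm ℝ E, Continuous q ∧
      ∀ x : E, q (x - k) < 1 → x ∈ U ∧ ‖f x‖ ≤ M ∧ ∀ v : E, q v < 1 → ‖df (x, v)‖ ≤ 1 :=
    fun k hk => aux_local_seminorm hU hf hdf hdf0 (hKU hk)
      (by have := hM₀ k hk; linarith)
  choose q hqc hq using key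
  -- finite subcover
  obtain ⟨t, ht⟩ := hK.elim_nhds_subcover'
    (fun k hk => {x | q k hk (x - k) < 1 / 2})
    (fun k hk => by
      refine (isOpen_lt ((hqc k hk).comp (continuous_id.sub continuous_const))
        continuous_const).mem_nhds ?_
      simp)
  set Q₀ : Seminorm ℝ E := t.sup (fun i => q i.1 i.2) with hQ₀def
  have hQ₀c : Continuous ⇑Q₀ := by
    refine Seminorm.continuous (r := 1) ?_
    rw [hQ₀def, Seminorm.ball_finset_sup_eq_iInter _ _ _ one_pos]
    refine (Filter.biInter_finset_mem t).mpr fun i hi => ?_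
    rw [Seminorm.ball_zero_eq]
    exact (isOpen_lt (hqc i.1 i.2) continuous_const).mem_nhds (by simp)
  set Q : Seminorm ℝ E := (2 : NNReal) • Q₀ with hQdef
  have hQval : ∀ w, Q w = 2 * Q₀ w := by
    intro w
    rw [hQdef, Seminorm.smul_apply, NNReal.smul_def]
    norm_num
  have hQc : Continuous ⇑Q := by
    have : ⇑Q = fun w => 2 * Q₀ w := funext hQval
    rw [this]; exact continuous_const.mul hQ₀c
  -- main property of Q
  have hQ : ∀ x : E, (∃ k ∈ K, Q (x - k) < 1) →
      x ∈ U ∧ ‖f x‖ ≤ M ∧ ∀ v : E, ‖df (x, v)‖ ≤ Q v := by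
    rintro x ⟨k, hk, hlt⟩
    obtain ⟨i, hi, hki⟩ := mem_iUnion₂.mp (ht hk)
    simp only [mem_setOf_eq] at hki
    have hle : ∀ w, q i.1 i.2 w ≤ Q₀ w := fun w => Seminorm.le_finset_sup_apply (p := fun j : ↥K => q j.1 j.2) hi
    have hxi : q i.1 i.2 (x - i.1) < 1 := by
      have h1 : q i.1 i.2 (x - i.1) ≤ q i.1 i.2 (x - k) + q i.1 i.2 (k - i.1) := by
        have : x - i.1 = (x - k) + (k - i.1) := by abel
        rw [this]; exact map_add_le_add _ _ _
      have h2 : q i.1 i.2 (x - k) ≤ Q₀ (x - k) := hle _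
      have h3 := hQval (x - k)
      linarith [apply_nonneg Q₀ (x - k)]
    obtain ⟨hxU, hfx, hdfx⟩ := hq i.1 i.2 x hxi
    refine ⟨hxU, hfx, fun v => ?_⟩
    rcases eq_or_lt_of_le (apply_nonneg (q i.1 i.2) v) with h0 | h0
    · -- q i v = 0 : show ‖df (x,v)‖ ≤ 0 ≤ Q v
      have hsmall : ∀ ε : ℝ, 0 < ε → ‖df (x, v)‖ ≤ ε := by
        intro ε hε
        have hveq : v = ε • (ε⁻¹ • v) := by rw [smul_inv_smul₀ hε.ne']
        have hq0 : q i.1 i.2 (ε⁻¹ • v) < 1 := by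
          rw [map_smul_eq_mul, ← h0, mul_zero]; norm_num
        have hdv := hdfx (ε⁻¹ • v) hq0
        have := aux_df_homog hderiv hxU (ε⁻¹ • v) hε
        rw [← hveq] at this
        rw [this, norm_smul, Real.norm_eq_abs, abs_of_pos hε]
        calc ε * ‖df (x, ε⁻¹ • v)‖ ≤ ε * 1 := by
              exact mul_le_mul_of_nonneg_left hdv hε.le
          _ = ε := mul_one ε
      have : ‖df (x, v)‖ ≤ 0 := le_of_forall_pos_le_add (by intro ε hε; simpa using hsmall ε hε)
      exact le_trans this (apply_nonneg Q v)
    · set c : ℝ := 2 * q i.1 i.2 v with hcdef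
      have hcpos : 0 < c := by positivity
      have hq0 : q i.1 i.2 (c⁻¹ • v) < 1 := by
        rw [map_smul_eq_mul, Real.norm_eq_abs, abs_of_pos (inv_pos.mpr hcpos), hcdef]
        rw [mul_inv, mul_assoc, inv_mul_cancel₀ h0.ne', mul_one]
        norm_num
      have hdv := hdfx (c⁻¹ • v) hq0
      have hveq : v = c • (c⁻¹ • v) := by rw [smul_inv_smul₀ hcpos.ne']
      have hhom := aux_df_homog hderiv hxU (c⁻¹ • v) hcpos
      rw [← hveq] at hhom
      rw [hhom, norm_smul, Real.norm_eq_abs, abs_of_pos hcpos]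
      have : c * ‖df (x, c⁻¹ • v)‖ ≤ c * 1 := mul_le_mul_of_nonneg_left hdv hcpos.le
      rw [mul_one] at this
      refine le_trans this ?_
      rw [hcdef, hQval]
      have := hle v
      linarith
  -- the seminorm P
  set CP : NNReal := ⟨2 * M + 2, by positivity⟩ with hCPdef
  set P : Seminorm ℝ E := CP • Q with hPdef
  have hPval : ∀ w, P w = (2 * M + 2) * Q w := by
    intro w
    rw [hPdef, Seminorm.smul_apply, NNReal.smul_def, hCPdef]
    norm_num
    exact Or.inl rfl
  have hPc : Continuous ⇑P := by
    have : ⇑P = fun w => (2 * M + 2) * Q w := funext hPval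
    rw [this]; exact continuous_const.mul hQc
  refine ⟨P, hPc, ?_, ?_⟩
  · rintro x ⟨k, hk, hlt⟩
    refine (hQ x ⟨k, hk, ?_⟩).1
    have := hPval (x - k)
    nlinarith [apply_nonneg Q (x - k)]
  · rintro p hpc hPp y z ⟨k, hk, hy⟩ ⟨k', hk', hz⟩
    have hQp : ∀ w, (2 * M + 2) * Q w ≤ p w := fun w => by
      rw [← hPval w]; exact hPp w
    have hQlep : ∀ w, Q w ≤ p w := by
      intro w
      have h1 := hQp w
      nlinarith [apply_nonneg Q w]
    have hyQ : Q (y - k) < 1 := lt_of_le_of_lt (hQlep _) hy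
    have hzQ : Q (z - k') < 1 := lt_of_le_of_lt (hQlep _) hz
    have hyP := hQ y ⟨k, hk, hyQ⟩
    have hzP := hQ z ⟨k', hk', hzQ⟩
    rcases le_or_gt (2 * M) (p (z - y)) with hcase | hcase
    · calc ‖f z - f y‖ ≤ ‖f z‖ + ‖f y‖ := norm_sub_le _ _
        _ ≤ M + M := add_le_add hzP.2.1 hyP.2.1
        _ = 2 * M := by ring
        _ ≤ p (z - y) := hcase
    · -- segment argument
      set v : E := z - y with hvdef
      have hseg : ∀ s ∈ Icc (0:ℝ) 1, (y + s • v) ∈ U ∧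
          ∀ u : E, ‖df (y + s • v, u)‖ ≤ Q u := by
        intro s hs
        have hQs : Q (y + s • v - k) < 1 := by
          have h1 : Q (y + s • v - k) ≤ Q (y - k) + s * Q v := by
            have heq : y + s • v - k = (y - k) + s • v := by abel
            rw [heq]
            refine le_trans (map_add_le_add _ _ _) ?_
            rw [map_smul_eq_mul, Real.norm_eq_abs, abs_of_nonneg hs.1]
          have h2 : (2 * M + 2) * Q (y - k) ≤ p (y - k) := hQp _
          have h3 : (2 * M + 2) * Q v ≤ p v := hQp _
          have h4 : s * Q v ≤ Q v := by
            nlinarith [apply_nonneg Q v, hs.2]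
          nlinarith [apply_nonneg Q (y - k), apply_nonneg Q v]
        have := hQ (y + s • v) ⟨k, hk, hQs⟩
        exact ⟨this.1, this.2.2⟩
      have hg : ∀ s ∈ Icc (0:ℝ) 1,
          HasDerivAt (fun r : ℝ => f (y + r • v)) (df (y + s • v, v)) s := by
        intro s hs
        rw [hasDerivAt_iff_tendsto_slope_zero]
        have h := hderiv (y + s • v) (hseg s hs).1 v
        have heq : ∀ τ : ℝ, y + (s + τ) • v = (y + s • v) + τ • v := by
          intro τ; rw [add_smul]; abel
        simp only [heq]
        exact h
      have hbound : ∀ s ∈ Icc (0:ℝ) 1, ‖df (y + s • v, v)‖ ≤ p v :=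
        fun s hs => le_trans ((hseg s hs).2 v) (hQlep v)
      have hmvt := Convex.norm_image_sub_le_of_norm_hasDerivWithin_le
        (f := fun r : ℝ => f (y + r • v)) (f' := fun r : ℝ => df (y + r • v, v))
        (C := p v) (s := Icc (0:ℝ) 1)
        (fun s hs => (hg s hs).hasDerivWithinAt) hbound (convex_Icc 0 1)
        (left_mem_Icc.mpr zero_le_one) (right_mem_Icc.mpr zero_le_one)
      simp only [one_smul, zero_smul, add_zero] at hmvt
      have hz' : y + v = z := by rw [hvdef]; abel
      rw [hz'] at hmvt
      simpa using hmvt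
end
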